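/- arXiv:2203.07096 — 8 statements merged into one kernel-verified Lean document; each statement's English description precedes it below -/
import Mathlib

section
/- Let D ≥ 1 and c ≥ 2 be fixed, and let c₀ > 0 be a constant. For all sufficiently large n the following holds. Let l > 0, let t be a real number with ln n ≤ t, and let R₁, …, R_m be Borel subsets of the cube C = [0,l]^D with m ≤ n^c, such that (i) every R_i has Lebesgue measure at least 4c·l^D·t/n, and (ii) for all i ≠ j the Lebesgue measure of R_i ∩ R_j is at most c₀·l^D/(n·2^{√(log₂ n)}). Then there exists a set S of n points in C such that |S ∩ R_i| ≥ t for every i, and |S ∩ R_i ∩ R_j| ≤ 3c·√(log₂ n) for all i ≠ j. -/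
open MeasureTheory Set

private lemma cyl_measure {E : Type*} [MeasurableSpace E] (ν : Measure E) [SigmaFinite ν]
    {n : ℕ} (A : Fin n → Set E) :
    Measure.pi (fun _ : Fin n => ν) {x | ∀ j, x j ∈ A j} = ∏ j, ν (A j) := by
  rw [show {x : Fin n → E | ∀ j, x j ∈ A j} = Set.pi Set.univ A by ext x; simp [Set.mem_pi]]
  exact Measure.pi_pi _ _

private lemma cyl_one {E : Type*} [MeasurableSpace E] (ν : Measure E) [IsProbabilityMeasure ν]
    {n : ℕ} (i : Fin n) (B : Set E) :
    Measure.pi (fun _ : Fin n => ν) {x | x i ∈ B} = ν B := by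
  classical
  have hset : {x : Fin n → E | x i ∈ B} = {x | ∀ k, x k ∈ (if k = i then B else Set.univ)} := by
    ext x
    constructor
    · intro hx k
      split_ifs with h
      · subst h; exact hx
      · trivial
    · intro hx
      have := hx i
      simpa using this
  rw [hset, cyl_measure]
  have : ∀ k : Fin n, ν (if k = i then B else Set.univ) = (if k = i then ν B else 1) := by
    intro k; split_ifs <;> simp
  rw [Finset.prod_congr rfl fun k _ => this k]
  simp

private lemma cyl_two {E : Type*} [MeasurableSpace E] (ν : Measure E) [IsProbabilityMeasure ν]
    {n : ℕ} (i j : Fin n) (hij : i ≠ j) (B : Set E) :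
    Measure.pi (fun _ : Fin n => ν) {x | x i ∈ B ∧ x j ∈ B} = ν B ^ 2 := by
  classical
  have hset : {x : Fin n → E | x i ∈ B ∧ x j ∈ B}
      = {x | ∀ k, x k ∈ (if k = i then B else if k = j then B else Set.univ)} := by
    ext x
    constructor
    · rintro ⟨h1, h2⟩ k
      split_ifs with h h'
      · subst h; exact h1
      · subst h'; exact h2
      · trivial
    · intro hx
      refine ⟨?_, ?_⟩
      · have := hx i; simpa using this
      · have := hx j; simpa [hij.symm] using this
  rw [hset, cyl_measure]
  have hterm : ∀ k : Fin n, ν (if k = i then B else if k = j then B else Set.univ)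
      = (if k = i then ν B else if k = j then ν B else 1) := by
    intro k; split_ifs <;> simp
  rw [Finset.prod_congr rfl fun k _ => hterm k]
  rw [← Finset.prod_sdiff (Finset.subset_univ ({i, j} : Finset (Fin n)))]
  rw [Finset.prod_eq_one, Finset.prod_pair hij]
  · simp [if_neg hij.symm, sq]
  · intro k hk
    simp only [Finset.mem_sdiff, Finset.mem_insert, Finset.mem_singleton, not_or] at hk
    simp [hk.2.1, hk.2.2]

private lemma real_binom_tail (n a : ℕ) (p : ℝ) (hp0 : 0 ≤ p) (hp1 : p ≤ 1) :
    ∑ T ∈ Finset.univ.powerset.filter (fun T : Finset (Fin n) => T.card ≤ a),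
      p ^ T.card * (1 - p) ^ (n - T.card) ≤ 2 ^ a * (1 - p / 2) ^ n := by
  classical
  have hq0 : 0 ≤ 1 - p := by linarith
  have h1 : ∀ T ∈ Finset.univ.powerset.filter (fun T : Finset (Fin n) => T.card ≤ a),
      p ^ T.card * (1 - p) ^ (n - T.card)
        ≤ 2 ^ a * ((p / 2) ^ T.card * (1 - p) ^ (n - T.card)) := by
    intro T hT
    have hTa : T.card ≤ a := (Finset.mem_filter.mp hT).2
    have : p ^ T.card = 2 ^ T.card * (p / 2) ^ T.card := by
      rw [← mul_pow]; ring_nf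
    rw [this]
    have h2 : (2 : ℝ) ^ T.card ≤ 2 ^ a := by
      exact pow_le_pow_right₀ (by norm_num) hTa
    have hnn : (0:ℝ) ≤ (p / 2) ^ T.card * (1 - p) ^ (n - T.card) := by positivity
    nlinarith [hnn, h2, pow_nonneg (by linarith : (0:ℝ) ≤ p/2) T.card,
      pow_nonneg hq0 (n - T.card)]
  refine (Finset.sum_le_sum h1).trans ?_
  rw [← Finset.mul_sum]
  have h3 : ∑ T ∈ Finset.univ.powerset.filter (fun T : Finset (Fin n) => T.card ≤ a),
      (p / 2) ^ T.card * (1 - p) ^ (n - T.card)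
      ≤ ∑ T ∈ (Finset.univ : Finset (Fin n)).powerset,
      (p / 2) ^ T.card * (1 - p) ^ (n - T.card) := by
    refine Finset.sum_le_sum_of_subset_of_nonneg (Finset.filter_subset _ _) ?_
    intro T _ _; positivity
  have h4 : ∑ T ∈ (Finset.univ : Finset (Fin n)).powerset,
      (p / 2) ^ T.card * (1 - p) ^ (n - T.card) = (1 - p / 2) ^ n := by
    have := Finset.prod_add (fun _ : Fin n => p / 2) (fun _ : Fin n => 1 - p) Finset.univ
    simp only [Finset.prod_const, Finset.card_univ, Fintype.card_fin] at this
    rw [show (1 - p / 2) = (p / 2 + (1 - p)) by ring, this]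
    refine Finset.sum_congr rfl fun T hT => ?_
    rw [Finset.card_univ_diff, Fintype.card_fin]
  rw [h4] at h3
  have h2a : (0:ℝ) ≤ 2 ^ a := by positivity
  nlinarith [h3]

private lemma lower_tail {E : Type*} [MeasurableSpace E] (ν : Measure E) [IsProbabilityMeasure ν]
    {n : ℕ} (A : Set E) (hA : MeasurableSet A) (a : ℕ) :
    Measure.pi (fun _ : Fin n => ν) {x | (x ⁻¹' A).ncard ≤ a}
      ≤ ENNReal.ofReal (2 ^ a * (1 - (ν A).toReal / 2) ^ n) := by
  classical
  set p := (ν A).toReal with hpdef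
  have hp0 : 0 ≤ p := ENNReal.toReal_nonneg
  have hp1 : p ≤ 1 := by
    rw [hpdef]
    exact ENNReal.toReal_le_of_le_ofReal zero_le_one (by simpa using prob_le_one)
  have hνA : ν A = ENNReal.ofReal p := (ENNReal.ofReal_toReal (measure_ne_top ν A)).symm
  have hνAc : ν Aᶜ = ENNReal.ofReal (1 - p) := by
    rw [measure_compl hA (measure_ne_top _ _), measure_univ, hνA,
      ← ENNReal.ofReal_one, ← ENNReal.ofReal_sub _ hp0]
  set P := Finset.univ.powerset.filter (fun T : Finset (Fin n) => T.card ≤ a) with hP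
  have hsub : {x : Fin n → E | (x ⁻¹' A).ncard ≤ a}
      ⊆ ⋃ T ∈ P, {x | ∀ j, x j ∈ (if j ∈ T then A else Aᶜ)} := by
    intro x hx
    have hfin : (x ⁻¹' A).Finite := Set.toFinite _
    refine Set.mem_iUnion₂.mpr ⟨hfin.toFinset, ?_, ?_⟩
    · rw [hP, Finset.mem_filter]
      refine ⟨Finset.mem_powerset.mpr (Finset.subset_univ _), ?_⟩
      rw [← Set.ncard_eq_toFinset_card _ hfin]; exact hx
    · intro j
      split_ifs with h
      · exact (Set.Finite.mem_toFinset hfin).mp h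
      · exact fun hc => h ((Set.Finite.mem_toFinset hfin).mpr hc)
  refine (measure_mono hsub).trans ((measure_biUnion_finset_le _ _).trans ?_)
  have hterm : ∀ T : Finset (Fin n),
      Measure.pi (fun _ : Fin n => ν) {x | ∀ j, x j ∈ (if j ∈ T then A else Aᶜ)}
        = ENNReal.ofReal (p ^ T.card * (1 - p) ^ (n - T.card)) := by
    intro T
    rw [cyl_measure]
    have h1 : ∀ j : Fin n, ν (if j ∈ T then A else Aᶜ)
        = (if j ∈ T then ENNReal.ofReal p else ENNReal.ofReal (1 - p)) := by
      intro j; split_ifs <;> [exact hνA; exact hνAc]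
    rw [Finset.prod_congr rfl fun j _ => h1 j, Finset.prod_ite, Finset.prod_const,
      Finset.prod_const]
    have hcard1 : (Finset.univ.filter (fun j => j ∈ T)).card = T.card := by
      congr 1; ext j; simp
    have hcard2 : (Finset.univ.filter (fun j => j ∉ T)).card = n - T.card := by
      rw [Finset.filter_not]
      rw [show Finset.univ.filter (fun j => j ∈ T) = T by ext j; simp]
      rw [Finset.card_sdiff_of_subset (Finset.subset_univ _), Finset.card_univ, Fintype.card_fin]
    rw [hcard1, hcard2, ← ENNReal.ofReal_pow hp0, ← ENNReal.ofReal_pow (by linarith),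
      ← ENNReal.ofReal_mul (by positivity)]
  calc ∑ T ∈ P, Measure.pi (fun _ : Fin n => ν) {x | ∀ j, x j ∈ (if j ∈ T then A else Aᶜ)}
      = ∑ T ∈ P, ENNReal.ofReal (p ^ T.card * (1 - p) ^ (n - T.card)) :=
        Finset.sum_congr rfl fun T _ => hterm T
    _ = ENNReal.ofReal (∑ T ∈ P, p ^ T.card * (1 - p) ^ (n - T.card)) := by
        rw [ENNReal.ofReal_sum_of_nonneg]
        intro T _
        exact mul_nonneg (pow_nonneg hp0 _) (pow_nonneg (by linarith) _)
    _ ≤ _ := ENNReal.ofReal_le_ofReal (real_binom_tail n a p hp0 hp1)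

private lemma upper_tail {E : Type*} [MeasurableSpace E] (ν : Measure E) [IsProbabilityMeasure ν]
    {n : ℕ} (B : Set E) (K : ℕ) :
    Measure.pi (fun _ : Fin n => ν) {x | K ≤ (x ⁻¹' B).ncard}
      ≤ (n.choose K : ENNReal) * ν B ^ K := by
  classical
  have hsub : {x : Fin n → E | K ≤ (x ⁻¹' B).ncard}
      ⊆ ⋃ T ∈ Finset.univ.powersetCard K, {x | ∀ j, x j ∈ (if j ∈ T then B else Set.univ)} := by
    intro x hx
    have hfin : (x ⁻¹' B).Finite := Set.toFinite _
    have hK : K ≤ hfin.toFinset.card := by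
      rwa [← Set.ncard_eq_toFinset_card _ hfin]
    obtain ⟨T, hTsub, hTcard⟩ := Finset.exists_subset_card_eq hK
    refine Set.mem_iUnion₂.mpr ⟨T, ?_, ?_⟩
    · simpa [Finset.mem_powersetCard_univ] using hTcard
    · intro j
      split_ifs with h
      · exact (Set.Finite.mem_toFinset hfin).mp (hTsub h)
      · trivial
  refine (measure_mono hsub).trans ((measure_biUnion_finset_le _ _).trans ?_)
  have hterm : ∀ T ∈ Finset.univ.powersetCard K,
      Measure.pi (fun _ : Fin n => ν) {x | ∀ j, x j ∈ (if j ∈ T then B else Set.univ)}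
        = ν B ^ K := by
    intro T hT
    have hTcard : T.card = K := (Finset.mem_powersetCard_univ).mp hT
    rw [cyl_measure]
    have h1 : ∀ j : Fin n, ν (if j ∈ T then B else Set.univ)
        = (if j ∈ T then ν B else 1) := by
      intro j; split_ifs <;> simp
    rw [Finset.prod_congr rfl fun j _ => h1 j, Finset.prod_ite, Finset.prod_const,
      Finset.prod_const, one_pow, mul_one]
    congr 1
    rw [← hTcard]
    congr 1; ext j; simp
  rw [Finset.sum_congr rfl hterm, Finset.sum_const, Finset.card_powersetCard,
    Finset.card_univ, Fintype.card_fin, nsmul_eq_mul]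

private lemma diag_null {D n : ℕ} (hD : 1 ≤ D) {l : ℝ} (hl : 0 < l)
    (ν : Measure (Fin D → ℝ)) [IsProbabilityMeasure ν]
    (hν : ∀ B : Set (Fin D → ℝ), MeasurableSet B →
      ν B ≤ (ENNReal.ofReal (l ^ D))⁻¹ * volume B)
    {i j : Fin n} (hij : i ≠ j) :
    Measure.pi (fun _ : Fin n => ν) {x | x i = x j ∧ x i ∈ Set.Icc 0 (fun _ => l)} = 0 := by
  classical
  set μ := Measure.pi (fun _ : Fin n => ν) with hμ
  set C : Set (Fin D → ℝ) := Set.Icc 0 (fun _ => l) with hC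
  have key : ∀ K : ℕ, 1 ≤ K → μ {x | x i = x j ∧ x i ∈ C} ≤ ENNReal.ofReal (1 / K) := by
    intro K hK
    set Q : (Fin D → Fin K) → Set (Fin D → ℝ) := fun a =>
      Set.Icc (fun d => l * (a d : ℕ) / K) (fun d => l * ((a d : ℕ) + 1) / K) with hQ
    -- covering
    have hcover : {x : Fin n → Fin D → ℝ | x i = x j ∧ x i ∈ C}
        ⊆ ⋃ a : Fin D → Fin K, {x | x i ∈ Q a ∧ x j ∈ Q a} := by
      rintro x ⟨hxij, hxC⟩
      obtain ⟨hx0, hxl⟩ := hxC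
      have ha : ∀ d : Fin D, ∃ b : ℕ, b < K ∧
          l * (b : ℕ) / K ≤ x i d ∧ x i d ≤ l * ((b : ℕ) + 1) / K := by
        intro d
        have h0 : (0:ℝ) ≤ x i d := hx0 d
        have h1 : x i d ≤ l := hxl d
        set b0 : ℕ := ⌊x i d * K / l⌋₊ with hb0
        have hKpos : (0:ℝ) < K := by exact_mod_cast hK
        refine ⟨min b0 (K - 1), by omega, ?_, ?_⟩
        · have hmin : (min b0 (K - 1) : ℕ) ≤ b0 := min_le_left _ _
          have hfl : (b0 : ℝ) ≤ x i d * K / l := Nat.floor_le (by positivity)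
          calc l * ((min b0 (K-1) : ℕ) : ℝ) / K ≤ l * (b0 : ℝ) / K := by
                have : ((min b0 (K-1) : ℕ) : ℝ) ≤ (b0 : ℝ) := by exact_mod_cast hmin
                gcongr
            _ ≤ x i d := by
                rw [div_le_iff₀ hKpos]
                calc l * (b0:ℝ) ≤ l * (x i d * K / l) := by gcongr
                  _ = x i d * K := by field_simp
        · by_cases hbK : b0 ≤ K - 1
          · have hmin : min b0 (K-1) = b0 := min_eq_left hbK
            have hfl : x i d * K / l < (b0 : ℝ) + 1 := Nat.lt_floor_add_one _
            rw [hmin, le_div_iff₀ hKpos]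
            have := (div_lt_iff₀ hl).mp hfl
            nlinarith
          · have hmin : min b0 (K-1) = K - 1 := min_eq_right (by omega)
            rw [hmin]
            have hcast : ((K - 1 : ℕ) : ℝ) + 1 = (K : ℝ) := by
              have h1K : (1:ℕ) ≤ K := hK
              push_cast [Nat.cast_sub h1K]
              ring
            rw [hcast]
            calc x i d ≤ l := h1
              _ = l * (K:ℝ) / K := by field_simp
      choose g hgK hal har using ha
      set a : Fin D → Fin K := fun d => ⟨g d, hgK d⟩ with hadef
      refine Set.mem_iUnion.mpr ⟨a, ⟨fun d => hal d, fun d => har d⟩, ?_⟩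
      rw [← hxij]
      exact ⟨fun d => hal d, fun d => har d⟩
    -- measure of each cell-pair event
    have hQvol : ∀ a, ν (Q a) ≤ ENNReal.ofReal ((1 / K : ℝ) ^ D) := by
      intro a
      have hKpos : (0:ℝ) < K := by exact_mod_cast hK
      refine (hν (Q a) measurableSet_Icc).trans ?_
      have hvol : volume (Q a) = ENNReal.ofReal ((l / K) ^ D) := by
        rw [hQ]
        rw [Real.volume_Icc_pi]
        have : ∀ d : Fin D, l * ((a d : ℕ) + 1) / K - l * (a d : ℕ) / K = l / K := by
          intro d; field_simp; ring
        simp only [this]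
        rw [Finset.prod_const, Finset.card_univ, Fintype.card_fin,
          ← ENNReal.ofReal_pow (by positivity)]
      rw [hvol, ← ENNReal.ofReal_inv_of_pos (by positivity),
        ← ENNReal.ofReal_mul (by positivity)]
      refine ENNReal.ofReal_le_ofReal (le_of_eq ?_)
      rw [div_pow, div_pow, one_pow]
      field_simp
    have hbound : μ {x | x i = x j ∧ x i ∈ C} ≤
        ∑ a : Fin D → Fin K, μ {x | x i ∈ Q a ∧ x j ∈ Q a} :=
      (measure_mono hcover).trans (measure_iUnion_fintype_le μ _)
    have heach : ∀ a : Fin D → Fin K,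
        μ {x | x i ∈ Q a ∧ x j ∈ Q a} ≤ ENNReal.ofReal ((1 / K : ℝ) ^ D) ^ 2 := by
      intro a
      rw [hμ, cyl_two ν i j hij]
      exact pow_le_pow_left' (hQvol a) 2
    refine hbound.trans ((Finset.sum_le_sum fun a _ => heach a).trans ?_)
    rw [Finset.sum_const, Finset.card_univ, nsmul_eq_mul]
    have hcard : (Fintype.card (Fin D → Fin K) : ENNReal) = ENNReal.ofReal ((K:ℝ) ^ D) := by
      rw [Fintype.card_fun, Fintype.card_fin, Fintype.card_fin]
      push_cast
      rw [← ENNReal.ofReal_natCast K, ← ENNReal.ofReal_pow (Nat.cast_nonneg K)]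
    rw [hcard, ← ENNReal.ofReal_pow (by positivity), ← ENNReal.ofReal_mul (by positivity)]
    refine ENNReal.ofReal_le_ofReal ?_
    have hKpos : (0:ℝ) < K := by exact_mod_cast hK
    have h1 : (K:ℝ) ^ D * ((1 / K : ℝ) ^ D) ^ 2 = (1 / K : ℝ) ^ D := by
      rw [← pow_mul, div_pow, div_pow, one_pow, one_pow]
      field_simp
      ring
    rw [h1]
    calc ((1:ℝ) / K) ^ D ≤ (1 / K) ^ 1 := by
          refine pow_le_pow_of_le_one (by positivity) ?_ hD
          rw [div_le_one hKpos]; exact_mod_cast hK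
      _ = 1 / K := pow_one _
  -- conclude measure zero
  by_contra h
  obtain ⟨K, hK⟩ := ENNReal.exists_inv_nat_lt h
  have hK1 : 1 ≤ K := by
    by_contra hc
    interval_cases K
    simp at hK
  have := key K hK1
  rw [ENNReal.ofReal_div_of_pos (by exact_mod_cast hK1), ENNReal.ofReal_one,
    ENNReal.ofReal_natCast] at this
  rw [one_div] at this
  exact absurd (lt_of_le_of_lt this hK) (lt_irrefl _)
set_option maxHeartbeats 1000000 in
/-- Derandomized core of the lower-bound framework: for sufficiently large `n`,
given ranges `R₁, …, R_m` (with `m ≤ n^c`) inside the cube `[0,l]^D`, each of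
Lebesgue measure at least `4·c·l^D·t/n`, with pairwise intersections of measure at
most `c₀·l^D/(n·2^(√(log₂ n)))`, there is a set `S` of `n` points in the cube such
that every range contains at least `t` points of `S` and every pairwise
intersection contains at most `3·c·√(log₂ n)` points of `S`. -/
theorem statement0 (D : ℕ) (hD : 1 ≤ D) (c : ℝ) (hc : 2 ≤ c) (c₀ : ℝ) (hc₀ : 0 < c₀) :
    ∃ N : ℕ, ∀ n : ℕ, N ≤ n →
      ∀ l : ℝ, 0 < l →
      ∀ t : ℝ, Real.log n ≤ t →
      ∀ m : ℕ, ∀ R : Fin m → Set (Fin D → ℝ),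
        (m : ℝ) ≤ (n : ℝ) ^ c →
        (∀ i, MeasurableSet (R i)) →
        (∀ i, R i ⊆ Set.Icc (0 : Fin D → ℝ) (fun _ => l)) →
        (∀ i, ENNReal.ofReal (4 * c * l ^ D * t / n) ≤ volume (R i)) →
        (∀ i j, i ≠ j →
          volume (R i ∩ R j) ≤
            ENNReal.ofReal (c₀ * l ^ D / (n * 2 ^ Real.sqrt (Real.logb 2 n)))) →
        ∃ S : Finset (Fin D → ℝ),
          S.card = n ∧
          (S : Set (Fin D → ℝ)) ⊆ Set.Icc (0 : Fin D → ℝ) (fun _ => l) ∧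
          (∀ i, t ≤ (((S : Set (Fin D → ℝ)) ∩ R i).ncard : ℝ)) ∧
          (∀ i j, i ≠ j →
            ((((S : Set (Fin D → ℝ)) ∩ R i ∩ R j).ncard : ℝ) ≤
              3 * c * Real.sqrt (Real.logb 2 n))) := by
  classical
  set A' := max (Real.log c₀) 0 with hA'def
  refine ⟨⌈Real.exp ((6 * A' + 3) ^ 2)⌉₊ + 1, ?_⟩
  intro n hn l hl t ht m R hm hRmeas hRsub hRvol hRint
  have hA0 : 0 ≤ A' := le_max_right _ _
  have hlc : Real.log c₀ ≤ A' := le_max_left _ _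
  have hn0 : 0 < n := lt_of_lt_of_le (Nat.succ_pos _) hn
  have hnpos : (0:ℝ) < n := by exact_mod_cast hn0
  have hnR : Real.exp ((6 * A' + 3) ^ 2) ≤ (n : ℝ) := by
    calc Real.exp ((6 * A' + 3) ^ 2) ≤ (⌈Real.exp ((6*A'+3)^2)⌉₊ : ℝ) := Nat.le_ceil _
      _ ≤ n := by exact_mod_cast le_trans (Nat.le_succ _) hn
  have hln : (6*A'+3)^2 ≤ Real.log n := (Real.le_log_iff_exp_le hnpos).mpr hnR
  set y := Real.sqrt (Real.log n) with hydef
  have hy0 : 0 ≤ y := Real.sqrt_nonneg _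
  have hlog0 : 0 ≤ Real.log n := le_trans (by positivity) hln
  have hy : 6*A' + 3 ≤ y := (Real.le_sqrt (by positivity) hlog0).mpr hln
  have hysq : y^2 = Real.log n := Real.sq_sqrt hlog0
  have hln9 : 9 ≤ Real.log n := by nlinarith
  have ht9 : 9 ≤ t := le_trans hln9 ht
  have ht0 : 0 ≤ t := by linarith
  set s := Real.sqrt (Real.logb 2 n) with hsdef
  have hlog2pos : 0 < Real.log 2 := Real.log_pos one_lt_two
  have hl2u : Real.log 2 < 0.6931471808 := Real.log_two_lt_d9
  have hl2l : 0.6931471803 < Real.log 2 := Real.log_two_gt_d9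
  have hlogb : Real.logb 2 n = Real.log n / Real.log 2 := Real.log_div_log.symm
  have hlogb0 : 0 ≤ Real.logb 2 n := by rw [hlogb]; positivity
  have hs0 : 0 ≤ s := Real.sqrt_nonneg _
  have hssq : s^2 = Real.logb 2 n := Real.sq_sqrt hlogb0
  have hsln : s^2 * Real.log 2 = Real.log n := by
    rw [hssq, hlogb]; field_simp
  have hsy : s ≤ 2*y := by
    have h4 : Real.logb 2 n ≤ 4 * Real.log n := by
      rw [hlogb, div_le_iff₀ hlog2pos]; nlinarith
    calc s ≤ Real.sqrt (4 * Real.log n) := Real.sqrt_le_sqrt h4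
      _ = 2*y := by
        rw [show (4:ℝ) = 2^2 by norm_num, Real.sqrt_mul (by positivity) _,
          Real.sqrt_sq (by norm_num : (0:ℝ) ≤ 2)]
  have hys : y ≤ s := by
    refine Real.sqrt_le_sqrt ?_
    rw [hlogb, le_div_iff₀ hlog2pos]; nlinarith
  have h2s : (0:ℝ) < 2 ^ s := Real.rpow_pos_of_pos two_pos s
  -- cube and uniform measure
  set C : Set (Fin D → ℝ) := Set.Icc 0 (fun _ => l) with hCdef
  have hCmeas : MeasurableSet C := measurableSet_Icc
  have hlD : (0:ℝ) < l ^ D := by positivity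
  have hCvol : volume C = ENNReal.ofReal (l ^ D) := by
    rw [hCdef, Real.volume_Icc_pi]
    simp only [Pi.zero_apply, sub_zero]
    rw [Finset.prod_const, Finset.card_univ, Fintype.card_fin, ← ENNReal.ofReal_pow hl.le]
  set ν : Measure (Fin D → ℝ) := (ENNReal.ofReal (l ^ D))⁻¹ • volume.restrict C with hνdef
  have hlDtop : ENNReal.ofReal (l^D) ≠ ⊤ := ENNReal.ofReal_ne_top
  have hlD0' : ENNReal.ofReal (l^D) ≠ 0 := by
    simp only [ne_eq, ENNReal.ofReal_eq_zero, not_le]; exact hlD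
  have hνapp : ∀ B : Set (Fin D → ℝ), MeasurableSet B → B ⊆ C →
      ν B = volume B * (ENNReal.ofReal (l ^ D))⁻¹ := by
    intro B hB hBC
    rw [hνdef, Measure.smul_apply, Measure.restrict_apply hB,
      Set.inter_eq_self_of_subset_left hBC, smul_eq_mul, mul_comm]
  have hνle : ∀ B : Set (Fin D → ℝ), MeasurableSet B →
      ν B ≤ (ENNReal.ofReal (l ^ D))⁻¹ * volume B := by
    intro B hB
    rw [hνdef, Measure.smul_apply, Measure.restrict_apply hB, smul_eq_mul]
    exact mul_le_mul_right (measure_mono Set.inter_subset_left) _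
  haveI hνprob : IsProbabilityMeasure ν := ⟨by
    rw [hνdef, Measure.smul_apply, Measure.restrict_apply MeasurableSet.univ,
      Set.univ_inter, hCvol, smul_eq_mul, ENNReal.inv_mul_cancel hlD0' hlDtop]⟩
  set μ := Measure.pi (fun _ : Fin n => ν) with hμdef
  haveI hμprob : IsProbabilityMeasure μ := by rw [hμdef]; infer_instance
  -- range measures under ν
  have hνR : ∀ i, ENNReal.ofReal (4 * c * t / n) ≤ ν (R i) := by
    intro i
    rw [hνapp _ (hRmeas i) (hRsub i)]
    have h1 : ENNReal.ofReal (4 * c * l ^ D * t / n)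
        = ENNReal.ofReal (4 * c * t / n) * ENNReal.ofReal (l ^ D) := by
      rw [← ENNReal.ofReal_mul (by positivity)]
      congr 1; field_simp
    calc ENNReal.ofReal (4*c*t/n)
        = ENNReal.ofReal (4*c*t/n) * (ENNReal.ofReal (l^D) * (ENNReal.ofReal (l^D))⁻¹) := by
          rw [ENNReal.mul_inv_cancel hlD0' hlDtop, mul_one]
      _ = ENNReal.ofReal (4*c*l^D*t/n) * (ENNReal.ofReal (l^D))⁻¹ := by
          rw [← mul_assoc, ← h1]
      _ ≤ volume (R i) * (ENNReal.ofReal (l^D))⁻¹ := mul_le_mul_left (hRvol i) _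
  have hνRR : ∀ i j, i ≠ j → ν (R i ∩ R j) ≤ ENNReal.ofReal (c₀ / (n * 2 ^ s)) := by
    intro i j hij
    refine (hνle _ ((hRmeas i).inter (hRmeas j))).trans ?_
    have h1 : ENNReal.ofReal (c₀ * l ^ D / (n * 2 ^ s))
        = ENNReal.ofReal (c₀ / (n * 2 ^ s)) * ENNReal.ofReal (l ^ D) := by
      rw [← ENNReal.ofReal_mul (by positivity)]
      congr 1; field_simp
    calc (ENNReal.ofReal (l ^ D))⁻¹ * volume (R i ∩ R j)
        ≤ (ENNReal.ofReal (l ^ D))⁻¹ * ENNReal.ofReal (c₀ * l ^ D / (n * 2 ^ s)) :=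
          mul_le_mul_right (hRint i j hij) _
      _ = ENNReal.ofReal (c₀ / (n * 2 ^ s)) * ((ENNReal.ofReal (l^D))⁻¹ * ENNReal.ofReal (l^D)) := by
          rw [h1]; ring
      _ = ENNReal.ofReal (c₀ / (n * 2 ^ s)) := by
          rw [ENNReal.inv_mul_cancel hlD0' hlDtop, mul_one]
  -- per-range lower-tail bound
  have hb1 : ∀ i : Fin m,
      μ {x : Fin n → (Fin D → ℝ) | ((x ⁻¹' R i).ncard : ℝ) < t}
        ≤ ENNReal.ofReal (Real.exp (t * Real.log 2 - 2 * c * t)) := by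
    intro i
    have hsub : {x : Fin n → (Fin D → ℝ) | ((x ⁻¹' R i).ncard : ℝ) < t}
        ⊆ {x | (x ⁻¹' R i).ncard ≤ ⌊t⌋₊} :=
      fun x hx => Nat.le_floor (le_of_lt hx)
    refine (measure_mono hsub).trans ((lower_tail ν (R i) (hRmeas i) ⌊t⌋₊).trans
      (ENNReal.ofReal_le_ofReal ?_))
    set p := (ν (R i)).toReal with hpdef
    have hp0 : 0 ≤ p := ENNReal.toReal_nonneg
    have hp1 : p ≤ 1 := by
      rw [hpdef]
      exact ENNReal.toReal_le_of_le_ofReal zero_le_one (by simpa using prob_le_one)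
    have hp : 4 * c * t / n ≤ p := by
      rw [hpdef]
      calc 4*c*t/n = (ENNReal.ofReal (4*c*t/n)).toReal :=
            (ENNReal.toReal_ofReal (by positivity)).symm
        _ ≤ _ := ENNReal.toReal_mono (measure_ne_top _ _) (hνR i)
    have h2a : (2:ℝ) ^ ⌊t⌋₊ ≤ Real.exp (t * Real.log 2) := by
      have he : (2:ℝ) ^ ⌊t⌋₊ = Real.exp ((⌊t⌋₊ : ℝ) * Real.log 2) := by
        rw [Real.exp_nat_mul, Real.exp_log two_pos]
      rw [he]
      refine Real.exp_le_exp.mpr ?_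
      exact mul_le_mul_of_nonneg_right (Nat.floor_le ht0) hlog2pos.le
    have hq : (1 - p/2) ^ n ≤ Real.exp (-(2*c*t)) := by
      have h1 : 1 - p/2 ≤ Real.exp (-(p/2)) := by
        have := Real.add_one_le_exp (-(p/2)); linarith
      have h2 : (1 - p/2) ^ n ≤ Real.exp (-(p/2)) ^ n := by
        refine pow_le_pow_left₀ (by linarith) h1 n
      refine h2.trans ?_
      rw [← Real.exp_nat_mul]
      refine Real.exp_le_exp.mpr ?_
      have hnp : 4*c*t ≤ (n:ℝ) * p := by
        have := (div_le_iff₀ hnpos).mp hp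
        linarith
      nlinarith
    calc (2:ℝ) ^ ⌊t⌋₊ * (1 - p/2) ^ n
        ≤ Real.exp (t * Real.log 2) * Real.exp (-(2*c*t)) := by
          exact mul_le_mul h2a hq (pow_nonneg (by linarith) n) (Real.exp_nonneg _)
      _ = Real.exp (t * Real.log 2 - 2*c*t) := by rw [← Real.exp_add]; ring_nf
  -- per-pair upper-tail bound
  set K : ℕ := ⌊3*c*s⌋₊ + 1 with hKdef
  have h3cs0 : 0 ≤ 3*c*s := by positivity
  have hb2 : ∀ i j : Fin m, i ≠ j →
      μ {x : Fin n → (Fin D → ℝ) | 3*c*s < ((x ⁻¹' (R i ∩ R j)).ncard : ℝ)}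
        ≤ ENNReal.ofReal (Real.exp ((Real.log c₀ - s * Real.log 2) * (3*c*s))) := by
    intro i j hij
    have hsub : {x : Fin n → (Fin D → ℝ) | 3*c*s < ((x ⁻¹' (R i ∩ R j)).ncard : ℝ)}
        ⊆ {x | K ≤ (x ⁻¹' (R i ∩ R j)).ncard} := by
      intro x hx
      have hx' : 3*c*s < ((x ⁻¹' (R i ∩ R j)).ncard : ℝ) := hx
      have h2 : ⌊3*c*s⌋₊ < (x ⁻¹' (R i ∩ R j)).ncard := (Nat.floor_lt h3cs0).mpr hx'
      show ⌊3*c*s⌋₊ + 1 ≤ (x ⁻¹' (R i ∩ R j)).ncard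
      omega
    refine (measure_mono hsub).trans ((upper_tail ν (R i ∩ R j) K).trans ?_)
    have hch : (n.choose K : ENNReal) ≤ ENNReal.ofReal ((n:ℝ)^K) := by
      rw [show ((n:ℝ)^K) = ((n^K : ℕ) : ℝ) by push_cast; ring, ENNReal.ofReal_natCast]
      exact_mod_cast Nat.choose_le_pow n K
    have hpow : ν (R i ∩ R j) ^ K ≤ ENNReal.ofReal ((c₀ / (n * 2 ^ s)) ^ K) := by
      rw [ENNReal.ofReal_pow (by positivity)]
      exact pow_le_pow_left' (hνRR i j hij) K
    calc (n.choose K : ENNReal) * ν (R i ∩ R j) ^ K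
        ≤ ENNReal.ofReal ((n:ℝ)^K) * ENNReal.ofReal ((c₀ / (n * 2 ^ s)) ^ K) :=
          mul_le_mul' hch hpow
      _ = ENNReal.ofReal ((n:ℝ)^K * (c₀ / (n * 2 ^ s)) ^ K) := by
          rw [← ENNReal.ofReal_mul (by positivity)]
      _ ≤ ENNReal.ofReal (Real.exp ((Real.log c₀ - s * Real.log 2) * (3*c*s))) := by
          refine ENNReal.ofReal_le_ofReal ?_
          have hβ : (n:ℝ)^K * (c₀ / (n * 2 ^ s)) ^ K = (c₀ / 2 ^ s) ^ K := by
            rw [← mul_pow]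
            congr 1
            field_simp
          rw [hβ]
          have hβpos : (0:ℝ) < c₀ / 2 ^ s := by positivity
          have hβ1 : c₀ / 2 ^ s ≤ 1 := by
            rw [div_le_one h2s]
            have hsl2 : A' ≤ s * Real.log 2 := by nlinarith
            calc c₀ = Real.exp (Real.log c₀) := (Real.exp_log hc₀).symm
              _ ≤ Real.exp (Real.log 2 * s) := Real.exp_le_exp.mpr (by nlinarith)
              _ = 2 ^ s := (Real.rpow_def_of_pos two_pos s).symm
          have h1 : (c₀ / 2 ^ s) ^ K = (c₀ / 2 ^ s) ^ (K:ℝ) := (Real.rpow_natCast _ K).symm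
          have h2 : (c₀ / 2 ^ s) ^ (K:ℝ) ≤ (c₀ / 2 ^ s) ^ (3*c*s) := by
            refine Real.rpow_le_rpow_of_exponent_ge hβpos hβ1 ?_
            rw [hKdef]
            push_cast
            exact le_of_lt (Nat.lt_floor_add_one _)
          have h3 : (c₀ / 2 ^ s) ^ (3*c*s) = Real.exp ((Real.log c₀ - s * Real.log 2) * (3*c*s)) := by
            rw [Real.rpow_def_of_pos hβpos]
            congr 1
            rw [Real.log_div (ne_of_gt hc₀) (ne_of_gt h2s), Real.log_rpow two_pos]
          rw [h1]
          exact h2.trans (le_of_eq h3)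
  -- numeric bounds
  have hmexp : (m:ℝ) ≤ Real.exp (c * t) := by
    refine hm.trans ?_
    rw [Real.rpow_def_of_pos hnpos]
    refine Real.exp_le_exp.mpr ?_
    nlinarith
  have hm1 : (m:ℝ) * Real.exp (t * Real.log 2 - 2*c*t) ≤ 1/4 := by
    calc (m:ℝ) * Real.exp (t * Real.log 2 - 2*c*t)
        ≤ Real.exp (c*t) * Real.exp (t * Real.log 2 - 2*c*t) :=
          mul_le_mul_of_nonneg_right hmexp (Real.exp_nonneg _)
      _ = Real.exp (t * Real.log 2 - c*t) := by rw [← Real.exp_add]; ring_nf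
      _ ≤ 1/4 := by
          rw [show (1/4:ℝ) = Real.exp (Real.log (1/4)) from (Real.exp_log (by norm_num)).symm]
          refine Real.exp_le_exp.mpr ?_
          have hlog4 : Real.log (1/4) = -(2 * Real.log 2) := by
            rw [one_div, Real.log_inv, show (4:ℝ) = 2^2 by norm_num, Real.log_pow]
            push_cast; ring
          rw [hlog4]
          nlinarith [mul_nonneg (by linarith : (0:ℝ) ≤ t - 9) (by nlinarith : (0:ℝ) ≤ c - Real.log 2)]
  have hm2 : (m:ℝ) * ((m:ℝ) * Real.exp ((Real.log c₀ - s * Real.log 2) * (3*c*s))) ≤ 1/4 := by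
    have hmsq : (m:ℝ) * (m:ℝ) ≤ Real.exp (2 * (c * Real.log n)) := by
      have h1 : (m:ℝ) ≤ Real.exp (c * Real.log n) := by
        refine hm.trans ?_
        rw [Real.rpow_def_of_pos hnpos]
        exact Real.exp_le_exp.mpr (by ring_nf; exact le_refl _)
      calc (m:ℝ) * m ≤ Real.exp (c * Real.log n) * Real.exp (c * Real.log n) :=
            mul_le_mul h1 h1 (Nat.cast_nonneg m) (Real.exp_nonneg _)
        _ = Real.exp (2 * (c * Real.log n)) := by rw [← Real.exp_add]; ring_nf
    have he2 : Real.exp ((Real.log c₀ - s * Real.log 2) * (3*c*s))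
        = Real.exp (3*c*s*Real.log c₀ - 3*c*Real.log n) := by
      congr 1
      have : (Real.log c₀ - s * Real.log 2) * (3*c*s)
          = 3*c*s*Real.log c₀ - 3*c*(s^2*Real.log 2) := by ring
      rw [this, hsln]
    calc (m:ℝ) * ((m:ℝ) * Real.exp ((Real.log c₀ - s * Real.log 2) * (3*c*s)))
        = ((m:ℝ) * m) * Real.exp ((Real.log c₀ - s * Real.log 2) * (3*c*s)) := by ring
      _ ≤ Real.exp (2 * (c * Real.log n)) * Real.exp (3*c*s*Real.log c₀ - 3*c*Real.log n) := by
          rw [he2]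
          exact mul_le_mul_of_nonneg_right hmsq (Real.exp_nonneg _)
      _ = Real.exp (3*c*s*Real.log c₀ - c*Real.log n) := by rw [← Real.exp_add]; ring_nf
      _ ≤ 1/4 := by
          rw [show (1/4:ℝ) = Real.exp (Real.log (1/4)) from (Real.exp_log (by norm_num)).symm]
          refine Real.exp_le_exp.mpr ?_
          have hlog4 : Real.log (1/4) = -(2 * Real.log 2) := by
            rw [one_div, Real.log_inv, show (4:ℝ) = 2^2 by norm_num, Real.log_pow]
            push_cast; ring
          rw [hlog4]
          have f1 : 3*c*s*Real.log c₀ ≤ (3*c*s)*A' :=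
            mul_le_mul_of_nonneg_left hlc h3cs0
          have f2 : (3*c*A')*s ≤ (3*c*A')*(2*y) :=
            mul_le_mul_of_nonneg_left hsy (mul_nonneg (by linarith) hA0)
          have f3 : c * Real.log n = c * y^2 := by rw [hysq]
          nlinarith [mul_nonneg (mul_nonneg (by linarith : (0:ℝ) ≤ c) hy0)
            (by linarith : (0:ℝ) ≤ y - (6*A'+3)), hl2u, hA0, hy0, hc,
            mul_nonneg hy0 hA0]
  -- the bad event
  set Bad : Set (Fin n → Fin D → ℝ) :=
    ((⋃ i : Fin m, {x : Fin n → Fin D → ℝ | ((x ⁻¹' R i).ncard : ℝ) < t})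
      ∪ (⋃ i : Fin m, ⋃ j : Fin m, ⋃ (_ : i ≠ j),
          {x : Fin n → Fin D → ℝ | 3*c*s < ((x ⁻¹' (R i ∩ R j)).ncard : ℝ)})
      ∪ {x : Fin n → Fin D → ℝ | ∃ i j : Fin n, i ≠ j ∧ x i = x j ∧ x i ∈ C})
      ∪ (⋃ k : Fin n, {x : Fin n → Fin D → ℝ | x k ∉ C}) with hBaddef
  have ha : μ (⋃ i : Fin m, {x : Fin n → Fin D → ℝ | ((x ⁻¹' R i).ncard : ℝ) < t})
      ≤ ENNReal.ofReal (1/4) := by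
    calc μ (⋃ i : Fin m, {x : Fin n → Fin D → ℝ | ((x ⁻¹' R i).ncard : ℝ) < t})
        ≤ ∑ i : Fin m, μ {x : Fin n → Fin D → ℝ | ((x ⁻¹' R i).ncard : ℝ) < t} :=
          measure_iUnion_fintype_le μ _
      _ ≤ ∑ _i : Fin m, ENNReal.ofReal (Real.exp (t * Real.log 2 - 2*c*t)) :=
          Finset.sum_le_sum fun i _ => hb1 i
      _ = m • ENNReal.ofReal (Real.exp (t * Real.log 2 - 2*c*t)) := by
          rw [Finset.sum_const, Finset.card_univ, Fintype.card_fin]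
      _ = ENNReal.ofReal ((m:ℝ) * Real.exp (t * Real.log 2 - 2*c*t)) := by
          rw [nsmul_eq_mul, ← ENNReal.ofReal_natCast m,
            ← ENNReal.ofReal_mul (Nat.cast_nonneg m)]
      _ ≤ ENNReal.ofReal (1/4) := ENNReal.ofReal_le_ofReal hm1
  have hpair : ∀ i j : Fin m,
      μ (⋃ (_ : i ≠ j), {x : Fin n → Fin D → ℝ | 3*c*s < ((x ⁻¹' (R i ∩ R j)).ncard : ℝ)})
        ≤ ENNReal.ofReal (Real.exp ((Real.log c₀ - s * Real.log 2) * (3*c*s))) := by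
    intro i j
    by_cases h : i ≠ j
    · exact (measure_mono (Set.iUnion_subset fun _ => subset_rfl)).trans (hb2 i j h)
    · rw [Set.iUnion_eq_empty.mpr (fun h' => absurd h' h), measure_empty]
      exact zero_le
  have hb : μ (⋃ i : Fin m, ⋃ j : Fin m, ⋃ (_ : i ≠ j),
      {x : Fin n → Fin D → ℝ | 3*c*s < ((x ⁻¹' (R i ∩ R j)).ncard : ℝ)})
      ≤ ENNReal.ofReal (1/4) := by
    calc μ (⋃ i : Fin m, ⋃ j : Fin m, ⋃ (_ : i ≠ j),
        {x : Fin n → Fin D → ℝ | 3*c*s < ((x ⁻¹' (R i ∩ R j)).ncard : ℝ)})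
        ≤ ∑ i : Fin m, μ (⋃ j : Fin m, ⋃ (_ : i ≠ j),
            {x : Fin n → Fin D → ℝ | 3*c*s < ((x ⁻¹' (R i ∩ R j)).ncard : ℝ)}) :=
          measure_iUnion_fintype_le μ _
      _ ≤ ∑ i : Fin m, ∑ j : Fin m, μ (⋃ (_ : i ≠ j),
            {x : Fin n → Fin D → ℝ | 3*c*s < ((x ⁻¹' (R i ∩ R j)).ncard : ℝ)}) :=
          Finset.sum_le_sum fun i _ => measure_iUnion_fintype_le μ _
      _ ≤ ∑ _i : Fin m, ∑ _j : Fin m,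
            ENNReal.ofReal (Real.exp ((Real.log c₀ - s * Real.log 2) * (3*c*s))) :=
          Finset.sum_le_sum fun i _ => Finset.sum_le_sum fun j _ => hpair i j
      _ = m • (m • ENNReal.ofReal (Real.exp ((Real.log c₀ - s * Real.log 2) * (3*c*s)))) := by
          rw [Finset.sum_const, Finset.sum_const, Finset.card_univ, Fintype.card_fin]
      _ = ENNReal.ofReal ((m:ℝ) * ((m:ℝ) *
            Real.exp ((Real.log c₀ - s * Real.log 2) * (3*c*s)))) := by
          rw [nsmul_eq_mul, nsmul_eq_mul, ← ENNReal.ofReal_natCast m,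
            ← ENNReal.ofReal_mul (Nat.cast_nonneg m),
            ← ENNReal.ofReal_mul (Nat.cast_nonneg m)]
      _ ≤ ENNReal.ofReal (1/4) := ENNReal.ofReal_le_ofReal hm2
  have hc3 : μ {x : Fin n → Fin D → ℝ | ∃ i j : Fin n, i ≠ j ∧ x i = x j ∧ x i ∈ C} ≤ 0 := by
    have hsub : {x : Fin n → Fin D → ℝ | ∃ i j : Fin n, i ≠ j ∧ x i = x j ∧ x i ∈ C}
        ⊆ ⋃ i : Fin n, ⋃ j : Fin n, ⋃ (_ : i ≠ j), {x | x i = x j ∧ x i ∈ C} := by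
      rintro x ⟨i, j, hij, h1, h2⟩
      exact Set.mem_iUnion.mpr ⟨i, Set.mem_iUnion.mpr ⟨j, Set.mem_iUnion.mpr ⟨hij, h1, h2⟩⟩⟩
    refine (measure_mono hsub).trans ?_
    calc μ (⋃ i : Fin n, ⋃ j : Fin n, ⋃ (_ : i ≠ j),
        {x : Fin n → Fin D → ℝ | x i = x j ∧ x i ∈ C})
        ≤ ∑ i : Fin n, ∑ j : Fin n, μ (⋃ (_ : i ≠ j),
            {x : Fin n → Fin D → ℝ | x i = x j ∧ x i ∈ C}) := by
          refine (measure_iUnion_fintype_le μ _).trans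
            (Finset.sum_le_sum fun i _ => measure_iUnion_fintype_le μ _)
      _ ≤ ∑ _i : Fin n, ∑ _j : Fin n, 0 := by
          refine Finset.sum_le_sum fun i _ => Finset.sum_le_sum fun j _ => ?_
          by_cases h : i ≠ j
          · refine (measure_mono (Set.iUnion_subset fun _ => subset_rfl)).trans ?_
            rw [hμdef]
            exact le_of_eq (diag_null hD hl ν hνle h)
          · rw [Set.iUnion_eq_empty.mpr (fun h' => absurd h' h), measure_empty]
      _ = 0 := by simp
  have hd4 : μ (⋃ k : Fin n, {x : Fin n → Fin D → ℝ | x k ∉ C}) ≤ 0 := by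
    have hνCc : ν Cᶜ = 0 := by
      rw [hνdef, Measure.smul_apply, Measure.restrict_apply hCmeas.compl,
        Set.compl_inter_self, measure_empty, smul_eq_mul, mul_zero]
    refine (measure_iUnion_fintype_le μ _).trans ?_
    have heq : ∀ k : Fin n, μ {x : Fin n → Fin D → ℝ | x k ∉ C} = 0 := by
      intro k
      have : {x : Fin n → Fin D → ℝ | x k ∉ C} = {x : Fin n → Fin D → ℝ | x k ∈ Cᶜ} := rfl
      rw [this, hμdef, cyl_one ν k Cᶜ, hνCc]
    rw [Finset.sum_congr rfl fun k _ => heq k]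
    simp
  have hBadlt : μ Bad < 1 := by
    have h := (measure_union_le _ _).trans (add_le_add
      ((measure_union_le _ _).trans (add_le_add
        ((measure_union_le _ _).trans (add_le_add ha hb)) hc3)) hd4)
    rw [← hBaddef] at h
    calc μ Bad ≤ ENNReal.ofReal (1/4) + ENNReal.ofReal (1/4) + 0 + 0 := h
      _ = ENNReal.ofReal (1/2) := by
        rw [add_zero, add_zero, ← ENNReal.ofReal_add (by norm_num) (by norm_num)]
        norm_num
      _ < 1 := ENNReal.ofReal_lt_one.mpr (by norm_num)
  have hne : Bad ≠ Set.univ := by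
    intro h
    rw [h, measure_univ] at hBadlt
    exact lt_irrefl _ hBadlt
  obtain ⟨x, hx⟩ := (Set.ne_univ_iff_exists_notMem _).mp hne
  have hx1 : ∀ i : Fin m, t ≤ ((x ⁻¹' R i).ncard : ℝ) := by
    intro i
    by_contra hcon
    exact hx (Or.inl (Or.inl (Or.inl (Set.mem_iUnion.mpr ⟨i, not_le.mp hcon⟩))))
  have hx2 : ∀ i j : Fin m, i ≠ j → ((x ⁻¹' (R i ∩ R j)).ncard : ℝ) ≤ 3*c*s := by
    intro i j hij
    by_contra hcon
    exact hx (Or.inl (Or.inl (Or.inr (Set.mem_iUnion.mpr ⟨i, Set.mem_iUnion.mpr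
      ⟨j, Set.mem_iUnion.mpr ⟨hij, not_le.mp hcon⟩⟩⟩))))
  have hx4 : ∀ k : Fin n, x k ∈ C := by
    intro k
    by_contra hcon
    exact hx (Or.inr (Set.mem_iUnion.mpr ⟨k, hcon⟩))
  have hinj : Function.Injective x := by
    intro i j hxy
    by_contra hne'
    exact hx (Or.inl (Or.inr ⟨i, j, hne', hxy, hx4 i⟩))
  have hcoe : ((Finset.image x Finset.univ : Finset (Fin D → ℝ)) : Set (Fin D → ℝ))
      = Set.range x := by
    rw [Finset.coe_image, Finset.coe_univ, Set.image_univ]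
  have hcnt : ∀ B : Set (Fin D → ℝ), (Set.range x ∩ B).ncard = (x ⁻¹' B).ncard := by
    intro B
    rw [Set.inter_comm, ← Set.image_preimage_eq_inter_range,
      Set.ncard_image_of_injective _ hinj]
  refine ⟨Finset.image x Finset.univ, ?_, ?_, ?_, ?_⟩
  · rw [Finset.card_image_of_injective _ hinj, Finset.card_univ, Fintype.card_fin]
  · rw [hcoe]
    exact Set.range_subset_iff.mpr hx4
  · intro i
    rw [hcoe, hcnt]
    exact hx1 i
  · intro i j hij
    rw [hcoe, Set.inter_assoc, hcnt]
    exact hx2 i j hij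
end

section
/- Let D ≥ 1 and k ≥ 2 be integers, let c ≥ 4k and A > 0 be reals. There exists N such that for all n ≥ N the following holds. Let l > 0, let C = [0,l]^D, let t be a real number with t ≥ ln n, and let 𝓡 be a finite family of Borel subsets of C with |𝓡| ≤ A·n^{k+1} such that every R ∈ 𝓡 has Lebesgue measure at least c·l^D·t/n. If X₁, …, X_n are independent random points, each uniformly distributed on C, then with probability strictly greater than 1/2, for every R ∈ 𝓡 at least t of the points X₁, …, X_n lie in R. -/
open MeasureTheory Set
open scoped ENNReal

private lemma lintegral_pi_pow' {α : Type*} [MeasurableSpace α] (μ : Measure α) [SigmaFinite μ]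
    (f : α → ℝ≥0∞) (hf : Measurable f) :
    ∀ n : ℕ, ∫⁻ x : Fin n → α, ∏ i, f (x i) ∂(Measure.pi fun _ : Fin n => μ)
      = (∫⁻ x, f x ∂μ) ^ n := by
  intro n
  induction n with
  | zero => simp [Measure.pi_empty_univ]
  | succ n ih =>
      have h := (measurePreserving_piFinSuccAbove (fun _ : Fin (n+1) => μ) 0).symm
      rw [← h.lintegral_comp_emb (MeasurableEquiv.measurableEmbedding _)]
      have : ∀ z : α × (Fin n → α),
          (∏ i, f (((MeasurableEquiv.piFinSuccAbove (fun _ : Fin (n+1) => α) 0).symm z) i))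
            = f z.1 * ∏ i : Fin n, f (z.2 i) := by
        intro z
        simp [MeasurableEquiv.piFinSuccAbove_symm_apply, Fin.prod_univ_succ, Fin.insertNth_zero,
          Fin.zero_succAbove]
      simp_rw [this]
      have hm : Measurable fun z : Fin n → α => ∏ i, f (z i) :=
        Finset.measurable_prod _ fun i _ => hf.comp (measurable_pi_apply i)
      rw [lintegral_prod_mul hf.aemeasurable hm.aemeasurable, ih, pow_succ, mul_comm]

set_option maxHeartbeats 1000000 in
/-- Derandomization lemma for slabs: if every range in a not-too-large family `𝓡`
of ranges inside the cube `C = [0,l]^D` has Lebesgue measure at least `c·l^D·t/n`,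
then `n` independent uniformly random points in `C` hit every range at least `t`
times with probability greater than `1/2`. The `n` independent uniform points are
modeled by the `n`-fold product of the normalized restriction of Lebesgue measure
to `C`. -/
theorem statement1 (D k : ℕ) (hD : 1 ≤ D) (hk : 2 ≤ k) (c A : ℝ)
    (hc : 4 * (k : ℝ) ≤ c) (hA : 0 < A) :
    ∃ N : ℕ, ∀ n : ℕ, N ≤ n →
      ∀ l : ℝ, 0 < l →
      ∀ t : ℝ, Real.log n ≤ t →
      ∀ 𝓡 : Finset (Set (Fin D → ℝ)),
        (𝓡.card : ℝ) ≤ A * (n : ℝ) ^ (k + 1) →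
        (∀ R ∈ 𝓡, MeasurableSet R) →
        (∀ R ∈ 𝓡, R ⊆ Set.Icc (0 : Fin D → ℝ) (fun _ => l)) →
        (∀ R ∈ 𝓡, ENNReal.ofReal (c * l ^ D * t / n) ≤ volume R) →
        (1 : ENNReal) / 2 <
          Measure.pi
            (fun _ : Fin n =>
              ((volume (Set.Icc (0 : Fin D → ℝ) (fun _ => l)))⁻¹.toNNReal •
                volume.restrict (Set.Icc (0 : Fin D → ℝ) (fun _ => l))))
            {x : Fin n → (Fin D → ℝ) |
              ∀ R ∈ 𝓡, t ≤ (({i : Fin n | x i ∈ R}).ncard : ℝ)} := by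
  classical
  refine ⟨max 3 (⌈2 * A⌉₊ + 1), ?_⟩
  intro n hn l hl t ht 𝓡 hcard hmeas hsub hvol
  -- basic numeric facts
  have hn3 : (3 : ℕ) ≤ n := le_trans (le_max_left _ _) hn
  have hn0 : 0 < n := by omega
  have hnR : (0 : ℝ) < n := by exact_mod_cast hn0
  have hAn : 2 * A < n := by
    have h1 : ⌈2 * A⌉₊ + 1 ≤ n := le_trans (le_max_right _ _) hn
    have h2 : 2 * A ≤ (⌈2 * A⌉₊ : ℝ) := Nat.le_ceil _
    have h3 : ((⌈2 * A⌉₊ + 1 : ℕ) : ℝ) ≤ n := by exact_mod_cast h1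
    push_cast at h3
    linarith
  have ht1 : 1 < t := by
    have h3 : Real.exp 1 < 3 := lt_trans Real.exp_one_lt_d9 (by norm_num)
    have : Real.log (Real.exp 1) < Real.log 3 :=
      Real.log_lt_log (Real.exp_pos 1) h3
    rw [Real.log_exp] at this
    have h4 : Real.log 3 ≤ Real.log n := by
      apply Real.log_le_log (by norm_num)
      exact_mod_cast hn3
    linarith
  have ht0 : 0 < t := lt_trans one_pos ht1
  have hc0 : (8 : ℝ) ≤ c := by
    have : (8 : ℝ) ≤ 4 * (k : ℝ) := by
      have : (2 : ℝ) ≤ (k : ℝ) := by exact_mod_cast hk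
      linarith
    linarith
  -- the cube and the measures
  set cube : Set (Fin D → ℝ) := Set.Icc (0 : Fin D → ℝ) (fun _ => l) with hcube
  set μ₀ : Measure (Fin D → ℝ) :=
    ((volume cube)⁻¹.toNNReal • volume.restrict cube) with hμ₀def
  set P : Measure (Fin n → (Fin D → ℝ)) := Measure.pi (fun _ : Fin n => μ₀) with hPdef
  have hV : volume cube = ENNReal.ofReal (l ^ D) := by
    rw [hcube, Real.volume_Icc_pi]
    simp [ENNReal.ofReal_pow hl.le]
  have hlD : (0 : ℝ) < l ^ D := pow_pos hl D
  have hV0 : volume cube ≠ 0 := by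
    rw [hV]; exact (ENNReal.ofReal_pos.mpr hlD).ne'
  have hVt : volume cube ≠ ∞ := by rw [hV]; exact ENNReal.ofReal_ne_top
  haveI hprob : IsProbabilityMeasure μ₀ := by
    constructor
    rw [hμ₀def, Measure.smul_apply, Measure.restrict_apply MeasurableSet.univ, Set.univ_inter,
      ENNReal.smul_def, smul_eq_mul, ENNReal.coe_toNNReal (ENNReal.inv_ne_top.mpr hV0)]
    exact ENNReal.inv_mul_cancel hV0 hVt
  haveI : IsProbabilityMeasure P := by rw [hPdef]; infer_instance
  -- per-range bound
  set E : ℝ := Real.exp (t - (1 - Real.exp (-1)) * (c * t)) with hE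
  have key : ∀ R ∈ 𝓡,
      P {x : Fin n → (Fin D → ℝ) | ((({i : Fin n | x i ∈ R}).ncard : ℝ) < t)}
        ≤ ENNReal.ofReal E := by
    intro R hR
    have hRm : MeasurableSet R := hmeas R hR
    -- the measure of R under μ₀
    have hμR : μ₀ R = (volume cube)⁻¹ * volume R := by
      rw [hμ₀def, Measure.smul_apply, Measure.restrict_apply hRm,
        Set.inter_eq_self_of_subset_left (hsub R hR), ENNReal.smul_def, smul_eq_mul,
        ENNReal.coe_toNNReal (ENNReal.inv_ne_top.mpr hV0)]
    have hctn0 : 0 ≤ c * t / n := by positivity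
    have hp_lb : ENNReal.ofReal (c * t / n) ≤ μ₀ R := by
      rw [hμR]
      have h1 : ENNReal.ofReal (c * l ^ D * t / n) = ENNReal.ofReal (c * t / n) * volume cube := by
        rw [hV, ← ENNReal.ofReal_mul hctn0]
        ring_nf
      calc ENNReal.ofReal (c * t / n)
          = ENNReal.ofReal (c * t / n) * (volume cube * (volume cube)⁻¹) := by
            rw [ENNReal.mul_inv_cancel hV0 hVt, mul_one]
        _ = (volume cube)⁻¹ * (ENNReal.ofReal (c * t / n) * volume cube) := by ring
        _ ≤ (volume cube)⁻¹ * volume R := by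
            gcongr
            rw [← h1]; exact hvol R hR
    have hp_ub : μ₀ R ≤ 1 := prob_le_one
    have hpt : μ₀ R ≠ ∞ := ne_top_of_le_ne_top ENNReal.one_ne_top hp_ub
    set p : ℝ := (μ₀ R).toReal with hp
    have hpR : μ₀ R = ENNReal.ofReal p := (ENNReal.ofReal_toReal hpt).symm
    have hp0 : 0 ≤ p := ENNReal.toReal_nonneg
    have hp1 : p ≤ 1 := by
      have := ENNReal.toReal_mono ENNReal.one_ne_top hp_ub
      simpa using this
    have hp_lbR : c * t / n ≤ p := by
      have := ENNReal.toReal_mono hpt hp_lb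
      rwa [ENNReal.toReal_ofReal hctn0] at this
    -- the weight function
    set g : (Fin D → ℝ) → ℝ≥0∞ :=
      fun y => if y ∈ R then ENNReal.ofReal (Real.exp (-1)) else 1 with hg
    have hgm : Measurable g := Measurable.ite hRm measurable_const measurable_const
    have hgint : ∫⁻ y, g y ∂μ₀ = ENNReal.ofReal (Real.exp (-1) * p + (1 - p)) := by
      have hgeq : g = R.indicator (fun _ => ENNReal.ofReal (Real.exp (-1)))
          + Rᶜ.indicator (fun _ => 1) := by
        funext y
        by_cases hy : y ∈ R <;> simp [hg, hy]
      rw [hgeq]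
      simp only [Pi.add_apply]
      rw [lintegral_add_left ((measurable_const).indicator hRm)]
      rw [lintegral_indicator hRm _, lintegral_indicator hRm.compl _]
      simp only [lintegral_const, Measure.restrict_apply MeasurableSet.univ, Set.univ_inter,
        one_mul]
      have hcompl : μ₀ Rᶜ = ENNReal.ofReal (1 - p) := by
        rw [measure_compl hRm hpt, measure_univ, hpR,
          ← ENNReal.ofReal_one, ← ENNReal.ofReal_sub _ hp0]
      rw [hcompl, hpR, ← ENNReal.ofReal_mul (Real.exp_nonneg _),
        ← ENNReal.ofReal_add (by positivity) (by linarith)]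
    have hgle : ∫⁻ y, g y ∂μ₀ ≤ ENNReal.ofReal (Real.exp (-((1 - Real.exp (-1)) * (c * t / n)))) := by
      rw [hgint]
      apply ENNReal.ofReal_le_ofReal
      have he1 : Real.exp (-1) < 1 := by
        rw [Real.exp_lt_one_iff]; norm_num
      have step1 : Real.exp (-1) * p + (1 - p) ≤ Real.exp (-((1 - Real.exp (-1)) * p)) := by
        have := Real.add_one_le_exp (-((1 - Real.exp (-1)) * p))
        linarith
      have step2 : Real.exp (-((1 - Real.exp (-1)) * p))
          ≤ Real.exp (-((1 - Real.exp (-1)) * (c * t / n))) := by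
        apply Real.exp_le_exp.mpr
        nlinarith
      linarith
    -- the product function and Markov
    set F : (Fin n → (Fin D → ℝ)) → ℝ≥0∞ := fun x => ∏ i, g (x i) with hF
    have hFm : Measurable F :=
      Finset.measurable_prod _ fun i _ => hgm.comp (measurable_pi_apply i)
    have hFval : ∀ x, F x = ENNReal.ofReal
        (Real.exp (-((({i : Fin n | x i ∈ R}).ncard : ℝ)))) := by
      intro x
      have hset : {i : Fin n | x i ∈ R} = ↑(Finset.univ.filter fun i => x i ∈ R) := by
        ext i; simp
      rw [hF]
      simp only [hg]
      rw [Finset.prod_ite, Finset.prod_const, Finset.prod_const_one, mul_one]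
      rw [hset, Set.ncard_coe_finset, ← ENNReal.ofReal_pow (Real.exp_nonneg _),
        ← Real.exp_nat_mul]
      congr 1
      push_cast
      ring
    have hsubset : {x : Fin n → (Fin D → ℝ) | ((({i : Fin n | x i ∈ R}).ncard : ℝ) < t)}
        ⊆ {x | ENNReal.ofReal (Real.exp (-t)) ≤ F x} := by
      intro x hx
      rw [Set.mem_setOf_eq, hFval x]
      apply ENNReal.ofReal_le_ofReal
      apply Real.exp_le_exp.mpr
      simp only [Set.mem_setOf_eq] at hx
      linarith
    have hmarkov := mul_meas_ge_le_lintegral₀ (μ := P) hFm.aemeasurable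
      (ENNReal.ofReal (Real.exp (-t)))
    have hFint : ∫⁻ x, F x ∂P = (∫⁻ y, g y ∂μ₀) ^ n := lintegral_pi_pow' μ₀ g hgm n
    have hFle : ∫⁻ x, F x ∂P ≤ ENNReal.ofReal (Real.exp (-((1 - Real.exp (-1)) * (c * t)))) := by
      rw [hFint]
      calc (∫⁻ y, g y ∂μ₀) ^ n
          ≤ (ENNReal.ofReal (Real.exp (-((1 - Real.exp (-1)) * (c * t / n))))) ^ n := by
            exact pow_le_pow_left' hgle n
        _ = ENNReal.ofReal (Real.exp (-((1 - Real.exp (-1)) * (c * t / n))) ^ n) := by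
            rw [ENNReal.ofReal_pow (Real.exp_nonneg _)]
        _ = ENNReal.ofReal (Real.exp (-((1 - Real.exp (-1)) * (c * t)))) := by
            rw [← Real.exp_nat_mul]
            congr 1
            field_simp
    have hε0 : ENNReal.ofReal (Real.exp (-t)) ≠ 0 := by
      simp [ENNReal.ofReal_pos.mpr (Real.exp_pos _), ENNReal.ofReal_eq_zero, not_le,
        Real.exp_pos]
    have hεt : ENNReal.ofReal (Real.exp (-t)) ≠ ∞ := ENNReal.ofReal_ne_top
    have hchain : ENNReal.ofReal (Real.exp (-t)) *
        P {x : Fin n → (Fin D → ℝ) | ((({i : Fin n | x i ∈ R}).ncard : ℝ) < t)}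
        ≤ ENNReal.ofReal (Real.exp (-((1 - Real.exp (-1)) * (c * t)))) := by
      calc ENNReal.ofReal (Real.exp (-t)) *
            P {x : Fin n → (Fin D → ℝ) | ((({i : Fin n | x i ∈ R}).ncard : ℝ) < t)}
          ≤ ENNReal.ofReal (Real.exp (-t)) * P {x | ENNReal.ofReal (Real.exp (-t)) ≤ F x} := by
            exact mul_le_mul_right (measure_mono hsubset) _
        _ ≤ ∫⁻ x, F x ∂P := hmarkov
        _ ≤ _ := hFle
    -- divide by the epsilon
    have := ENNReal.div_le_div_right hchain (ENNReal.ofReal (Real.exp (-t)))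
    rw [mul_comm, mul_div_assoc, ENNReal.div_self hε0 hεt, mul_one] at this
    calc P {x : Fin n → (Fin D → ℝ) | ((({i : Fin n | x i ∈ R}).ncard : ℝ) < t)}
        ≤ ENNReal.ofReal (Real.exp (-((1 - Real.exp (-1)) * (c * t)))) /
            ENNReal.ofReal (Real.exp (-t)) := this
      _ = ENNReal.ofReal E := by
          rw [← ENNReal.ofReal_div_of_pos (Real.exp_pos _), hE, ← Real.exp_sub]
          congr 1
          ring
  -- union bound
  set bad : Set (Fin n → (Fin D → ℝ)) :=
    ⋃ R ∈ 𝓡, {x : Fin n → (Fin D → ℝ) | ((({i : Fin n | x i ∈ R}).ncard : ℝ) < t)} with hbad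
  have hbadle : P bad ≤ ENNReal.ofReal (A * (n : ℝ) ^ (k + 1) * E) := by
    calc P bad ≤ ∑ R ∈ 𝓡, P {x : Fin n → (Fin D → ℝ) |
            ((({i : Fin n | x i ∈ R}).ncard : ℝ) < t)} := measure_biUnion_finset_le _ _
      _ ≤ ∑ _R ∈ 𝓡, ENNReal.ofReal E := Finset.sum_le_sum key
      _ = (𝓡.card : ℝ≥0∞) * ENNReal.ofReal E := by
          rw [Finset.sum_const, nsmul_eq_mul]
      _ ≤ ENNReal.ofReal (A * (n : ℝ) ^ (k + 1)) * ENNReal.ofReal E := by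
          gcongr
          rw [← ENNReal.ofReal_natCast]
          exact ENNReal.ofReal_le_ofReal hcard
      _ = ENNReal.ofReal (A * (n : ℝ) ^ (k + 1) * E) := by
          rw [← ENNReal.ofReal_mul (by positivity)]
  -- the real estimate
  have hreal : A * (n : ℝ) ^ (k + 1) * E < 1 / 2 := by
    have hexp1 : Real.exp (-1) ≤ 3 / 8 := by
      have h83 : (8 : ℝ) / 3 ≤ Real.exp 1 := le_trans (by norm_num) Real.exp_one_gt_d9.le
      rw [Real.exp_neg]
      rw [inv_le_comm₀ (Real.exp_pos 1) (by norm_num)] at *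
      · linarith [h83]
    have hbeta : ((k : ℝ) + 2) * t ≤ (1 - Real.exp (-1)) * (c * t) - t := by
      have hkR : (2 : ℝ) ≤ (k : ℝ) := by exact_mod_cast hk
      have h1 : (5 / 8 : ℝ) ≤ 1 - Real.exp (-1) := by linarith
      have h2 : ((k : ℝ) + 3) ≤ (1 - Real.exp (-1)) * c := by nlinarith
      nlinarith
    have hE_le : E ≤ ((n : ℝ) ^ (k + 2))⁻¹ := by
      have h1 : E ≤ Real.exp (-(((k : ℝ) + 2) * t)) := by
        rw [hE]
        apply Real.exp_le_exp.mpr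
        linarith
      have h2 : Real.exp (-(((k : ℝ) + 2) * t)) ≤ Real.exp (-(((k : ℝ) + 2) * Real.log n)) := by
        apply Real.exp_le_exp.mpr
        have : (0 : ℝ) < (k : ℝ) + 2 := by positivity
        nlinarith
      have h3 : Real.exp (-(((k : ℝ) + 2) * Real.log n)) = ((n : ℝ) ^ (k + 2))⁻¹ := by
        have he : Real.exp (((k + 2 : ℕ) : ℝ) * Real.log n) = (n : ℝ) ^ (k + 2) := by
          rw [Real.exp_nat_mul, Real.exp_log hnR]
        rw [show -(((k : ℝ) + 2) * Real.log n) = -(((k + 2 : ℕ) : ℝ) * Real.log n) by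
            push_cast; ring,
          Real.exp_neg, he]
      linarith
    have hnpow : (0 : ℝ) < (n : ℝ) ^ (k + 2) := by positivity
    have h4 : A * (n : ℝ) ^ (k + 1) * E ≤ A * (n : ℝ) ^ (k + 1) / (n : ℝ) ^ (k + 2) := by
      rw [div_eq_mul_inv]
      have hE0 : 0 ≤ E := Real.exp_nonneg _
      gcongr
    have h5 : A * (n : ℝ) ^ (k + 1) / (n : ℝ) ^ (k + 2) = A / n := by
      rw [pow_succ]
      field_simp
      ring
    rw [h5] at h4
    have h6 : A / n < 1 / 2 := by
      rw [div_lt_div_iff₀ hnR (by norm_num)]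
      linarith
    linarith
  have hbadlt : P bad < 1 / 2 := by
    calc P bad ≤ ENNReal.ofReal (A * (n : ℝ) ^ (k + 1) * E) := hbadle
      _ < ENNReal.ofReal (1 / 2) := by
          exact (ENNReal.ofReal_lt_ofReal_iff (by norm_num)).mpr hreal
      _ = 1 / 2 := by
          rw [ENNReal.ofReal_div_of_pos (by norm_num)]
          norm_num
  -- conclusion
  set good : Set (Fin n → (Fin D → ℝ)) :=
    {x : Fin n → (Fin D → ℝ) | ∀ R ∈ 𝓡, t ≤ (({i : Fin n | x i ∈ R}).ncard : ℝ)} with hgood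
  have hcover : (Set.univ : Set (Fin n → (Fin D → ℝ))) ⊆ good ∪ bad := by
    intro x _
    by_cases hx : x ∈ good
    · exact Or.inl hx
    · right
      rw [hgood, Set.mem_setOf_eq] at hx
      push_neg at hx
      obtain ⟨R, hR, hRx⟩ := hx
      exact Set.mem_biUnion hR hRx
  have hone : (1 : ℝ≥0∞) ≤ P good + P bad := by
    calc (1 : ℝ≥0∞) = P Set.univ := (measure_univ).symm
      _ ≤ P (good ∪ bad) := measure_mono hcover
      _ ≤ P good + P bad := measure_union_le _ _
  by_contra hcon
  push_neg at hcon
  have : P good + P bad < 1 / 2 + 1 / 2 :=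
    ENNReal.add_lt_add_of_le_of_lt (ne_top_of_le_ne_top (by norm_num) hcon) hcon hbadlt
  rw [ENNReal.add_halves] at this
  exact absurd hone (not_le.mpr this)
end

section
/- Let D ≥ 1 and k ≥ 1 be integers and let c, A > 0 be reals. There exists N such that for all n ≥ N the following holds. Let l > 0, let C = [0,l]^D, and let 𝓕 be a finite family of Borel subsets of C with |𝓕| ≤ A·n^{2k} such that every F ∈ 𝓕 has Lebesgue measure at most c·l^D/(n·2^{√(log₂ n)}). If X₁, …, X_n are independent random points, each uniformly distributed on C, then with probability strictly greater than 1/2, for every F ∈ 𝓕 strictly fewer than 3k·√(log₂ n) of the points X₁, …, X_n lie in F. -/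
open MeasureTheory Set Real
open scoped NNReal ENNReal

set_option maxHeartbeats 1000000 in

lemma key_real (k : ℕ) (hk : 1 ≤ k) (c A : ℝ) (hc : 0 < c) (hA : 0 < A) :
    ∃ N : ℕ, 2 ≤ N ∧ ∀ n : ℕ, N ≤ n →
      A * (n:ℝ)^(2*k) * (c / 2 ^ Real.sqrt (Real.logb 2 n)) ^ ⌈3*(k:ℝ)*Real.sqrt (Real.logb 2 n)⌉₊ < 1/2 := by
  set c' : ℝ := max c 1 with hc'
  set q : ℝ := Real.logb 2 c' with hq
  have hc'1 : 1 ≤ c' := le_max_right _ _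
  have hc'0 : 0 < c' := by linarith
  have hq0 : 0 ≤ q := Real.logb_nonneg one_lt_two hc'1
  set s₀ : ℝ := max 1 (8*q) with hs₀
  have hs₀1 : 1 ≤ s₀ := le_max_left _ _
  refine ⟨max 2 (max (⌈(2:ℝ)^(s₀^2)⌉₊ + 1) (⌈4*A^2⌉₊ + 1)), le_max_left _ _, ?_⟩
  intro n hn
  have hn2 : 2 ≤ n := le_trans (le_max_left _ _) hn
  have hnR : (2:ℝ) ≤ n := by exact_mod_cast hn2
  have hn0 : (0:ℝ) < n := by linarith
  have hn1 : (1:ℝ) ≤ n := by linarith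
  set L : ℝ := Real.logb 2 n with hL
  set s : ℝ := Real.sqrt L with hs
  have hnbig : (2:ℝ)^(s₀^2) ≤ n := by
    have h1 : ⌈(2:ℝ)^(s₀^2)⌉₊ + 1 ≤ n := le_trans (le_trans (le_max_left _ _) (le_max_right _ _)) hn
    exact_mod_cast (Nat.ceil_le.mp (Nat.le_of_succ_le h1))
  have hLge : s₀^2 ≤ L := by
    have h2 := Real.logb_le_logb_of_le one_lt_two (Real.rpow_pos_of_pos two_pos _) hnbig
    rwa [Real.logb_rpow two_pos (by norm_num)] at h2
  have hs₀0 : (0:ℝ) ≤ s₀ := by linarith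
  have hL0 : 0 ≤ L := le_trans (by positivity) hLge
  have hss₀ : s₀ ≤ s := by
    rw [hs]
    have h3 := Real.sqrt_le_sqrt hLge
    rwa [Real.sqrt_sq hs₀0] at h3
  have hs1 : 1 ≤ s := le_trans hs₀1 hss₀
  have hs0 : 0 < s := by linarith
  have hsq : s^2 = L := Real.sq_sqrt hL0
  have hqs : 8*q ≤ s := le_trans (le_max_right _ _) hss₀
  set m : ℕ := ⌈3*(k:ℝ)*s⌉₊ with hm
  have hkR : (1:ℝ) ≤ k := by exact_mod_cast hk
  have hmlb : 3*(k:ℝ)*s ≤ m := Nat.le_ceil _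
  have hmub : (m:ℝ) ≤ 3*(k:ℝ)*s + 1 := le_of_lt (Nat.ceil_lt_add_one (by positivity))
  have hmub' : (m:ℝ) ≤ 4*(k:ℝ)*s := by nlinarith
  have h2s : (0:ℝ) < (2:ℝ)^s := Real.rpow_pos_of_pos two_pos _
  -- replace c by c' ≥ 1
  have step1 : (c / 2 ^ s) ^ m ≤ (c' / 2 ^ s) ^ m := by
    apply pow_le_pow_left₀ (by positivity)
    gcongr
    exact le_max_left _ _
  -- rewrite as rpow
  have hc'eq : c' = (2:ℝ) ^ q := (Real.rpow_logb two_pos (by norm_num) hc'0).symm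
  have step2 : (c' / 2 ^ s) ^ m = (2:ℝ) ^ ((q - s) * m) := by
    rw [hc'eq, ← Real.rpow_sub two_pos, ← Real.rpow_natCast ((2:ℝ)^(q-s)) m,
      ← Real.rpow_mul (by norm_num)]
  have hexp : (q - s) * m ≤ -(5*k/2) * L := by
    have h4 : q * m ≤ (k/2) * L := by
      have hq8 : q ≤ s/8 := by linarith
      calc q * m ≤ q * (4*k*s) := by
            apply mul_le_mul_of_nonneg_left hmub' hq0
        _ ≤ (s/8) * (4*k*s) := by
            apply mul_le_mul_of_nonneg_right hq8 (by positivity)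
        _ = (k/2) * s^2 := by ring
        _ = (k/2) * L := by rw [hsq]
    have h5 : 3*(k:ℝ)*L ≤ s * m := by
      calc (3:ℝ)*k*L = (3*k*s) * s := by rw [← hsq]; ring
        _ ≤ (m:ℝ) * s := by
            apply mul_le_mul_of_nonneg_right hmlb (le_of_lt hs0)
        _ = s * m := by ring
    nlinarith
  have step3 : (2:ℝ) ^ ((q - s) * m) ≤ (2:ℝ) ^ (-(5*k/2) * L) := by
    exact Real.rpow_le_rpow_of_exponent_le one_le_two hexp
  have h2L : (2:ℝ) ^ L = n := Real.rpow_logb two_pos (by norm_num) hn0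
  have step4 : (2:ℝ) ^ (-(5*k/2) * L) = (n:ℝ) ^ (-(5*k/2) : ℝ) := by
    rw [mul_comm, Real.rpow_mul (by norm_num), h2L]
  have hpowcast : (n:ℝ)^(2*k) = (n:ℝ) ^ ((2*k : ℕ) : ℝ) := (Real.rpow_natCast _ _).symm
  have step5 : (n:ℝ) ^ ((2*k : ℕ) : ℝ) * (n:ℝ) ^ (-(5*k/2) : ℝ) = (n:ℝ) ^ ((2*(k:ℝ)) + -(5*k/2)) := by
    rw [← Real.rpow_add hn0]
    norm_num
  have step6 : (n:ℝ) ^ ((2*(k:ℝ)) + -(5*k/2)) ≤ (n:ℝ) ^ (-(1/2) : ℝ) := by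
    apply Real.rpow_le_rpow_of_exponent_le hn1
    linarith
  have hsqrtn : (n:ℝ) ^ (-(1/2) : ℝ) = (Real.sqrt n)⁻¹ := by
    rw [Real.rpow_neg (le_of_lt hn0), Real.sqrt_eq_rpow]
  have hn4A : 4*A^2 < (n:ℝ) := by
    have h6 : ⌈4*A^2⌉₊ + 1 ≤ n := le_trans (le_trans (le_max_right _ _) (le_max_right _ _)) hn
    have h7 : ((⌈4*A^2⌉₊:ℝ) + 1) ≤ n := by exact_mod_cast h6
    have h8 : 4*A^2 ≤ (⌈4*A^2⌉₊:ℝ) := Nat.le_ceil _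
    linarith
  have h2A : 2*A < Real.sqrt n := by
    have h9 : Real.sqrt ((2*A)^2) < Real.sqrt n := Real.sqrt_lt_sqrt (by positivity) (by nlinarith)
    rwa [Real.sqrt_sq (by positivity)] at h9
  have hsn : 0 < Real.sqrt n := by positivity
  have hP : (c / 2^s)^m ≤ (n:ℝ)^(-(5*k/2) : ℝ) := by
    rw [← step4]
    calc (c / 2^s)^m ≤ (c' / 2^s)^m := step1
      _ = (2:ℝ) ^ ((q - s) * m) := step2
      _ ≤ (2:ℝ) ^ (-(5*k/2) * L) := step3
  calc A * (n:ℝ)^(2*k) * (c / 2^s)^m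
      ≤ A * ((n:ℝ)^(2*k) * (n:ℝ)^(-(5*k/2) : ℝ)) := by
        rw [mul_assoc]
        exact mul_le_mul_of_nonneg_left (mul_le_mul_of_nonneg_left hP (by positivity)) hA.le
    _ = A * (n:ℝ)^((2*(k:ℝ)) + -(5*k/2)) := by rw [hpowcast, step5]
    _ ≤ A * (n:ℝ)^(-(1/2) : ℝ) := mul_le_mul_of_nonneg_left step6 hA.le
    _ < 1/2 := by
        rw [hsqrtn]
        have h10 : 2*A*(Real.sqrt n)⁻¹ < Real.sqrt n * (Real.sqrt n)⁻¹ :=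
          mul_lt_mul_of_pos_right h2A (inv_pos.mpr hsn)
        rw [mul_inv_cancel₀ hsn.ne'] at h10
        linarith


lemma tail_bound {α : Type*} [MeasurableSpace α] (ν : Measure α) [IsProbabilityMeasure ν]
    (n m : ℕ) (F : Set α) :
    Measure.pi (fun _ : Fin n => ν) {x : Fin n → α | m ≤ ({i : Fin n | x i ∈ F}).ncard}
      ≤ (n : ENNReal) ^ m * (ν F) ^ m := by
  classical
  calc Measure.pi (fun _ : Fin n => ν) {x : Fin n → α | m ≤ ({i : Fin n | x i ∈ F}).ncard}
      ≤ Measure.pi (fun _ : Fin n => ν)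
          (⋃ S ∈ Finset.univ.powersetCard m, Set.pi univ (fun i : Fin n => if i ∈ S then F else univ)) := by
        apply measure_mono
        intro x hx
        simp only [mem_setOf_eq] at hx
        have hfin : ({i : Fin n | x i ∈ F}).Finite := Set.toFinite _
        rw [Set.ncard_eq_toFinset_card _ hfin] at hx
        obtain ⟨S, hSsub, hScard⟩ := Finset.exists_subset_card_eq hx
        simp only [Set.mem_iUnion, exists_prop]
        refine ⟨S, Finset.mem_powersetCard_univ.mpr hScard, fun i _ => ?_⟩
        by_cases hi : i ∈ S
        · simp only [hi, if_true]
          exact (Set.Finite.mem_toFinset hfin).mp (hSsub hi)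
        · simp [hi]
    _ ≤ ∑ S ∈ Finset.univ.powersetCard m,
          Measure.pi (fun _ : Fin n => ν) (Set.pi univ (fun i : Fin n => if i ∈ S then F else univ)) :=
        measure_biUnion_finset_le _ _
    _ = ∑ S ∈ Finset.univ.powersetCard m, (ν F) ^ m := by
        apply Finset.sum_congr rfl
        intro S hS
        rw [Measure.pi_pi]
        have : ∀ i : Fin n, ν (if i ∈ S then F else univ) = if i ∈ S then ν F else 1 := by
          intro i; by_cases hi : i ∈ S <;> simp [hi]
        simp_rw [this]
        rw [Finset.prod_ite_mem, Finset.univ_inter, Finset.prod_const,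
          (Finset.mem_powersetCard_univ.mp hS)]
    _ = (Finset.univ.powersetCard m).card • (ν F) ^ m := by rw [Finset.sum_const]
    _ ≤ (n : ENNReal) ^ m * (ν F) ^ m := by
        rw [nsmul_eq_mul, Finset.card_powersetCard, Finset.card_univ, Fintype.card_fin]
        apply mul_le_mul_left
        have h1 : (n.choose m) ≤ n ^ m := Nat.choose_le_pow n m
        calc ((n.choose m : ℕ) : ENNReal) ≤ ((n ^ m : ℕ) : ENNReal) := by exact_mod_cast h1
          _ = (n : ENNReal) ^ m := by push_cast; ring

/-- Derandomization lemma for intersections: if every set in a not-too-large family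
`𝓕` of subsets of the cube `C = [0,l]^D` has Lebesgue measure at most
`c·l^D/(n·2^(√(log₂ n)))`, then `n` independent uniformly random points in `C` hit
every set of `𝓕` strictly fewer than `3k·√(log₂ n)` times with probability greater
than `1/2`. The `n` independent uniform points are modeled by the `n`-fold product of
the normalized restriction of Lebesgue measure to `C`. -/
theorem statement2 (D k : ℕ) (hD : 1 ≤ D) (hk : 1 ≤ k) (c A : ℝ)
    (hc : 0 < c) (hA : 0 < A) :
    ∃ N : ℕ, ∀ n : ℕ, N ≤ n →
      ∀ l : ℝ, 0 < l →
      ∀ 𝓕 : Finset (Set (Fin D → ℝ)),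
        (𝓕.card : ℝ) ≤ A * (n : ℝ) ^ (2 * k) →
        (∀ F ∈ 𝓕, MeasurableSet F) →
        (∀ F ∈ 𝓕, F ⊆ Set.Icc (0 : Fin D → ℝ) (fun _ => l)) →
        (∀ F ∈ 𝓕,
          volume F ≤
            ENNReal.ofReal (c * l ^ D / (n * 2 ^ Real.sqrt (Real.logb 2 n)))) →
        (1 : ENNReal) / 2 <
          Measure.pi
            (fun _ : Fin n =>
              ((volume (Set.Icc (0 : Fin D → ℝ) (fun _ => l)))⁻¹.toNNReal •
                volume.restrict (Set.Icc (0 : Fin D → ℝ) (fun _ => l))))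
            {x : Fin n → (Fin D → ℝ) |
              ∀ F ∈ 𝓕,
                (({i : Fin n | x i ∈ F}).ncard : ℝ) <
                  3 * k * Real.sqrt (Real.logb 2 n)} := by
  classical
  obtain ⟨N, hN2, hNkey⟩ := key_real k hk c A hc hA
  refine ⟨N, ?_⟩
  intro n hn l hl 𝓕 hcard hmeas hsub hvolF
  have hn2 : 2 ≤ n := le_trans hN2 hn
  have hnR : (2:ℝ) ≤ n := by exact_mod_cast hn2
  have hn0 : (0:ℝ) < n := by linarith
  set s : ℝ := Real.sqrt (Real.logb 2 n) with hs
  have hs0 : 0 ≤ s := Real.sqrt_nonneg _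
  have h2s : (0:ℝ) < (2:ℝ)^s := Real.rpow_pos_of_pos two_pos _
  set C : Set (Fin D → ℝ) := Set.Icc (0 : Fin D → ℝ) (fun _ => l) with hC
  have hvolC : volume C = ENNReal.ofReal (l ^ D) := by
    rw [hC, Real.volume_Icc_pi]
    simp only [Pi.zero_apply, sub_zero, Finset.prod_const, Finset.card_univ, Fintype.card_fin]
    rw [← ENNReal.ofReal_pow hl.le]
  have hlD : (0:ℝ) < l ^ D := by positivity
  have hv0 : volume C ≠ 0 := by rw [hvolC]; simp [ENNReal.ofReal_eq_zero, not_le, hlD]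
  have hvtop : volume C ≠ ⊤ := by rw [hvolC]; exact ENNReal.ofReal_ne_top
  set μ : Measure (Fin D → ℝ) := ((volume C)⁻¹.toNNReal • volume.restrict C) with hμ
  have hcoe : (((volume C)⁻¹.toNNReal : ℝ≥0) : ℝ≥0∞) = (volume C)⁻¹ :=
    ENNReal.coe_toNNReal (by simp [ENNReal.inv_ne_top, hv0])
  have hprob : IsProbabilityMeasure μ := by
    constructor
    rw [hμ, Measure.smul_apply, Measure.restrict_apply_univ, ENNReal.smul_def, smul_eq_mul, hcoe,
      ENNReal.inv_mul_cancel hv0 hvtop]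
  haveI := hprob
  have hμF : ∀ F ∈ 𝓕, μ F ≤ ENNReal.ofReal (c / (n * 2^s)) := by
    intro F hF
    have h1 : μ F = (volume C)⁻¹ * volume F := by
      rw [hμ, Measure.smul_apply, Measure.restrict_apply (hmeas F hF), ENNReal.smul_def, smul_eq_mul, hcoe,
        Set.inter_eq_self_of_subset_left (hsub F hF)]
    rw [h1, hvolC, ← ENNReal.ofReal_inv_of_pos hlD]
    calc ENNReal.ofReal (l^D)⁻¹ * volume F
        ≤ ENNReal.ofReal (l^D)⁻¹ * ENNReal.ofReal (c * l ^ D / (n * 2 ^ s)) :=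
          mul_le_mul_right (hvolF F hF) _
      _ = ENNReal.ofReal ((l^D)⁻¹ * (c * l ^ D / (n * 2 ^ s))) :=
          (ENNReal.ofReal_mul (by positivity)).symm
      _ = ENNReal.ofReal (c / (n * 2^s)) := by
          congr 1
          field_simp
  set m : ℕ := ⌈3*(k:ℝ)*s⌉₊ with hm
  set E : Set (Fin n → (Fin D → ℝ)) :=
    {x : Fin n → (Fin D → ℝ) | ∀ F ∈ 𝓕, (({i : Fin n | x i ∈ F}).ncard : ℝ) < 3 * k * s} with hE
  set P : Measure (Fin n → (Fin D → ℝ)) := Measure.pi (fun _ : Fin n => μ) with hP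
  haveI : IsProbabilityMeasure P := by rw [hP]; infer_instance
  have hEc : Eᶜ ⊆ ⋃ F ∈ 𝓕, {x : Fin n → (Fin D → ℝ) | m ≤ ({i : Fin n | x i ∈ F}).ncard} := by
    intro x hx
    simp only [hE, mem_compl_iff, mem_setOf_eq, not_forall, not_lt] at hx
    obtain ⟨F, hF, hge⟩ := hx
    simp only [Set.mem_iUnion, mem_setOf_eq, exists_prop]
    exact ⟨F, hF, Nat.ceil_le.mpr hge⟩
  have hcompl : P Eᶜ < 1/2 := by
    have hb : P Eᶜ ≤ ENNReal.ofReal (A * (n:ℝ)^(2*k) * (c / 2^s)^m) := by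
      calc P Eᶜ ≤ P (⋃ F ∈ 𝓕, {x : Fin n → (Fin D → ℝ) | m ≤ ({i : Fin n | x i ∈ F}).ncard}) :=
            measure_mono hEc
        _ ≤ ∑ F ∈ 𝓕, P {x : Fin n → (Fin D → ℝ) | m ≤ ({i : Fin n | x i ∈ F}).ncard} :=
            measure_biUnion_finset_le _ _
        _ ≤ ∑ F ∈ 𝓕, (n : ℝ≥0∞)^m * (ENNReal.ofReal (c / (n * 2^s)))^m := by
            apply Finset.sum_le_sum
            intro F hF
            refine le_trans (tail_bound μ n m F) ?_
            exact mul_le_mul_right (pow_le_pow_left' (hμF F hF) m) _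
        _ = (𝓕.card : ℝ≥0∞) * ((n : ℝ≥0∞) * ENNReal.ofReal (c / (n * 2^s)))^m := by
            rw [Finset.sum_const, nsmul_eq_mul, mul_pow]
        _ ≤ ENNReal.ofReal (A * (n:ℝ)^(2*k)) * (ENNReal.ofReal (c / 2^s))^m := by
            apply mul_le_mul'
            · rw [← ENNReal.ofReal_natCast]
              exact ENNReal.ofReal_le_ofReal hcard
            · apply pow_le_pow_left'
              rw [← ENNReal.ofReal_natCast, ← ENNReal.ofReal_mul (by positivity)]
              apply ENNReal.ofReal_le_ofReal
              rw [show (n:ℝ) * (c / ((n:ℝ) * 2^s)) = c / 2^s by field_simp]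
        _ = ENNReal.ofReal (A * (n:ℝ)^(2*k) * (c / 2^s)^m) := by
            rw [← ENNReal.ofReal_pow (by positivity), ← ENNReal.ofReal_mul (by positivity)]
    refine lt_of_le_of_lt hb ?_
    have hlt := hNkey n hn
    calc ENNReal.ofReal (A * (n:ℝ)^(2*k) * (c / 2^s)^m)
        < ENNReal.ofReal (1/2) := (ENNReal.ofReal_lt_ofReal_iff (by norm_num)).mpr hlt
      _ = 1/2 := by
          rw [show (1/2:ℝ) = (2:ℝ)⁻¹ by norm_num, ENNReal.ofReal_inv_of_pos two_pos,
            ENNReal.ofReal_ofNat, one_div]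
  have huniv : P univ = 1 := measure_univ
  have h1 : (1:ℝ≥0∞) ≤ P E + P Eᶜ := by
    rw [← huniv, ← Set.union_compl_self E]
    exact measure_union_le E Eᶜ
  by_contra hcon
  push_neg at hcon
  have h2 : P E + P Eᶜ < 1/2 + 1/2 :=
    ENNReal.add_lt_add_of_le_of_lt (ne_top_of_le_ne_top (by norm_num) hcon) hcon hcompl
  rw [ENNReal.add_halves] at h2
  exact absurd (lt_of_le_of_lt h1 h2) (lt_irrefl _)
end

section
/- Let Δ, D ≥ 2 be integers and let P(X₁, …, X_D) = X₁ − X₂^Δ + Σ_m A_m X₁^{m₁}·X₂^{m₂}···X_D^{m_D}, where the sum ranges over multi-indices m of total degree at most Δ and the coefficients satisfy 0 ≤ A_m ≤ 1. Then there exists a constant K > 0 depending only on Δ and D such that the following holds: for every (x₂, …, x_D) ∈ [1,2]^{D−1}, every p₁ ≥ 0 with P(p₁, x₂, …, x_D) = 0, every r ∈ [0,1], and every γ ≥ 0 with P(p₁ + γ, x₂, …, x_D) = r, one has r/K ≤ γ ≤ r. -/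
open Finset

/-- The value at `x ∈ ℝ^(d+2)` of the `D`-variate polynomial
`P(X₁,…,X_D) = X₁ − X₂^Δ + Σ_m A_m X₁^{m₁}···X_D^{m_D}`, where the sum ranges over
multi-indices `m` of total degree at most `Δ` (every such multi-index has all
entries at most `Δ`, hence is encoded as an element of `Fin (d+2) → Fin (Δ+1)`). -/
def packedVal (Δ d : ℕ) (A : (Fin (d + 2) → Fin (Δ + 1)) → ℝ)
    (x : Fin (d + 2) → ℝ) : ℝ :=
  x 0 - (x 1) ^ Δ +
    ∑ m : Fin (d + 2) → Fin (Δ + 1),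
      if (∑ i, (m i : ℕ)) ≤ Δ then A m * ∏ i, (x i) ^ (m i : ℕ) else 0

lemma packedVal_update (Δ d : ℕ) (A : (Fin (d + 2) → Fin (Δ + 1)) → ℝ)
    (x : Fin (d + 2) → ℝ) (t : ℝ) :
    packedVal Δ d A (Function.update x 0 t) =
      t - (x 1) ^ Δ + ∑ m : Fin (d + 2) → Fin (Δ + 1),
        if (∑ i, (m i : ℕ)) ≤ Δ then
          A m * (t ^ (m 0 : ℕ) * ∏ i : Fin (d + 1), (x i.succ) ^ (m i.succ : ℕ))
        else 0 := by
  unfold packedVal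
  rw [Function.update_self, Function.update_of_ne (Fin.ne_of_val_ne (by simp))]
  congr 1
  apply Finset.sum_congr rfl
  intro m _
  have hprod : ∏ i, (Function.update x 0 t i) ^ (m i : ℕ)
      = t ^ (m 0 : ℕ) * ∏ i : Fin (d + 1), (x i.succ) ^ (m i.succ : ℕ) := by
    rw [Fin.prod_univ_succ, Function.update_self]
    exact congrArg _ (Finset.prod_congr rfl fun i _ => by
      rw [Function.update_of_ne (Fin.succ_ne_zero i)])
  rw [hprod]

lemma pow_sub_pow_le' (M a b : ℝ) (hM : 1 ≤ M) (ha : 0 ≤ a) (hab : a ≤ b) (hbM : b ≤ M) :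
    ∀ k : ℕ, b ^ k - a ^ k ≤ (b - a) * k * M ^ k := by
  intro k
  induction k with
  | zero => simp
  | succ k ih =>
    have hak : a ^ k ≤ M ^ k := pow_le_pow_left₀ ha (hab.trans hbM) k
    have hpk : a ^ k ≤ b ^ k := pow_le_pow_left₀ ha hab k
    have hMk0 : (0:ℝ) ≤ M ^ k := by positivity
    have hMkk : M ^ k ≤ M ^ (k + 1) := by rw [pow_succ]; nlinarith
    have h1 : b * (b ^ k - a ^ k) ≤ M * ((b - a) * k * M ^ k) := by
      apply mul_le_mul hbM ih (by linarith)
      linarith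
    have h2 : (b - a) * a ^ k ≤ (b - a) * M ^ (k + 1) :=
      mul_le_mul_of_nonneg_left (hak.trans hMkk) (sub_nonneg.2 hab)
    calc b ^ (k + 1) - a ^ (k + 1) = b * (b ^ k - a ^ k) + (b - a) * a ^ k := by
          rw [pow_succ, pow_succ]; ring
      _ ≤ M * ((b - a) * k * M ^ k) + (b - a) * M ^ (k + 1) := add_le_add h1 h2
      _ = (b - a) * (k + 1 : ℕ) * M ^ (k + 1) := by push_cast; rw [pow_succ]; ring

/-- Lemma `slabwidth`: there is a constant `K > 0`, depending only on `Δ` and the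
dimension `D = d+2`, such that for every packed polynomial with coefficients in
`[0,1]`, every `(x₂,…,x_D) ∈ [1,2]^{D−1}`, every root `p₁ ≥ 0` of `P(·, x₂,…,x_D)`,
every `r ∈ [0,1]` and every `γ ≥ 0` with `P(p₁+γ, x₂,…,x_D) = r`, one has
`r/K ≤ γ ≤ r`. -/
theorem statement6 (Δ d : ℕ) (hΔ : 2 ≤ Δ) :
    ∃ K : ℝ, 0 < K ∧
      ∀ A : (Fin (d + 2) → Fin (Δ + 1)) → ℝ,
        (∀ m, 0 ≤ A m ∧ A m ≤ 1) →
        ∀ x : Fin (d + 2) → ℝ,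
          (∀ i, i ≠ 0 → x i ∈ Set.Icc (1 : ℝ) 2) →
          ∀ p₁ : ℝ, 0 ≤ p₁ →
            packedVal Δ d A (Function.update x 0 p₁) = 0 →
            ∀ r ∈ Set.Icc (0 : ℝ) 1, ∀ γ : ℝ, 0 ≤ γ →
              packedVal Δ d A (Function.update x 0 (p₁ + γ)) = r →
              r / K ≤ γ ∧ γ ≤ r := by
  classical
  set M : ℝ := 2 ^ Δ + 1 with hMdef
  have hM1 : (1:ℝ) ≤ M := by rw [hMdef]; nlinarith [pow_pos (by norm_num : (0:ℝ) < 2) Δ]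
  set c : ℝ := Δ * M ^ Δ * 2 ^ (Δ * (d + 1)) with hcdef
  have hc0 : 0 ≤ c := by positivity
  set N : ℝ := (Fintype.card (Fin (d + 2) → Fin (Δ + 1)) : ℝ) with hNdef
  have hN0 : 0 ≤ N := Nat.cast_nonneg _
  have hK : (0:ℝ) < 1 + N * c := by nlinarith [mul_nonneg hN0 hc0]
  refine ⟨1 + N * c, hK, ?_⟩
  intro A hA x hx p₁ hp₁ h0 r hr γ hγ hγr
  rw [packedVal_update] at h0 hγr
  have hx' : ∀ i : Fin (d + 1), (1:ℝ) ≤ x i.succ ∧ x i.succ ≤ 2 := fun i => by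
    have := hx i.succ (Fin.succ_ne_zero i); exact ⟨this.1, this.2⟩
  have hC0 : ∀ m : Fin (d + 2) → Fin (Δ + 1),
      0 ≤ ∏ i : Fin (d + 1), (x i.succ) ^ (m i.succ : ℕ) := fun m =>
    Finset.prod_nonneg fun i _ => pow_nonneg (by linarith [(hx' i).1]) _
  have hCle : ∀ m : Fin (d + 2) → Fin (Δ + 1),
      (∏ i : Fin (d + 1), (x i.succ) ^ (m i.succ : ℕ)) ≤ 2 ^ (Δ * (d + 1)) := by
    intro m
    have h2 : (2:ℝ) ^ (Δ * (d + 1)) = ∏ _i : Fin (d + 1), (2:ℝ) ^ Δ := by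
      rw [Finset.prod_const, Finset.card_univ, Fintype.card_fin, ← pow_mul]
    rw [h2]
    apply Finset.prod_le_prod (fun i _ => pow_nonneg (by linarith [(hx' i).1]) _)
    intro i _
    calc (x i.succ) ^ (m i.succ : ℕ) ≤ 2 ^ (m i.succ : ℕ) :=
          pow_le_pow_left₀ (by linarith [(hx' i).1]) (hx' i).2 _
      _ ≤ (2:ℝ) ^ Δ := pow_le_pow_right₀ one_le_two (Fin.is_le _)
  have hSnn : ∀ t : ℝ, 0 ≤ t → 0 ≤ ∑ m : Fin (d + 2) → Fin (Δ + 1),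
      if (∑ i, (m i : ℕ)) ≤ Δ then
        A m * (t ^ (m 0 : ℕ) * ∏ i : Fin (d + 1), (x i.succ) ^ (m i.succ : ℕ)) else 0 := by
    intro t ht
    apply Finset.sum_nonneg
    intro m _
    split
    · exact mul_nonneg (hA m).1 (mul_nonneg (pow_nonneg ht _) (hC0 m))
    · exact le_refl 0
  have hx1 : (1:ℝ) ≤ x 1 ∧ x 1 ≤ 2 := by
    have := hx 1 (Fin.ne_of_val_ne (by simp)); exact ⟨this.1, this.2⟩
  have hp2 : p₁ ≤ 2 ^ Δ := by
    have h1 : (x 1) ^ Δ ≤ 2 ^ Δ := pow_le_pow_left₀ (by linarith [hx1.1]) hx1.2 Δ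
    have h2 := hSnn p₁ hp₁
    linarith
  -- key identity
  have hsub : (∑ m : Fin (d + 2) → Fin (Δ + 1),
        if (∑ i, (m i : ℕ)) ≤ Δ then
          A m * ((p₁ + γ) ^ (m 0 : ℕ) * ∏ i : Fin (d + 1), (x i.succ) ^ (m i.succ : ℕ)) else 0)
      - (∑ m : Fin (d + 2) → Fin (Δ + 1),
        if (∑ i, (m i : ℕ)) ≤ Δ then
          A m * (p₁ ^ (m 0 : ℕ) * ∏ i : Fin (d + 1), (x i.succ) ^ (m i.succ : ℕ)) else 0)
      = ∑ m : Fin (d + 2) → Fin (Δ + 1),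
        if (∑ i, (m i : ℕ)) ≤ Δ then
          A m * (((p₁ + γ) ^ (m 0 : ℕ) - p₁ ^ (m 0 : ℕ))
            * ∏ i : Fin (d + 1), (x i.succ) ^ (m i.succ : ℕ)) else 0 := by
    rw [← Finset.sum_sub_distrib]
    apply Finset.sum_congr rfl
    intro m _
    split
    · ring
    · ring
  have key : r = γ + ∑ m : Fin (d + 2) → Fin (Δ + 1),
      if (∑ i, (m i : ℕ)) ≤ Δ then
        A m * (((p₁ + γ) ^ (m 0 : ℕ) - p₁ ^ (m 0 : ℕ))
          * ∏ i : Fin (d + 1), (x i.succ) ^ (m i.succ : ℕ)) else 0 := by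
    rw [← hsub]; linarith
  -- each difference term is nonnegative
  have hdiff0 : ∀ m : Fin (d + 2) → Fin (Δ + 1),
      (0:ℝ) ≤ if (∑ i, (m i : ℕ)) ≤ Δ then
        A m * (((p₁ + γ) ^ (m 0 : ℕ) - p₁ ^ (m 0 : ℕ))
          * ∏ i : Fin (d + 1), (x i.succ) ^ (m i.succ : ℕ)) else 0 := by
    intro m
    split
    · have hpow : p₁ ^ (m 0 : ℕ) ≤ (p₁ + γ) ^ (m 0 : ℕ) :=
        pow_le_pow_left₀ hp₁ (by linarith) _
      exact mul_nonneg (hA m).1 (mul_nonneg (by linarith) (hC0 m))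
    · exact le_refl 0
  have hγr' : γ ≤ r := by
    have hs : (0:ℝ) ≤ ∑ m : Fin (d + 2) → Fin (Δ + 1),
        if (∑ i, (m i : ℕ)) ≤ Δ then
          A m * (((p₁ + γ) ^ (m 0 : ℕ) - p₁ ^ (m 0 : ℕ))
            * ∏ i : Fin (d + 1), (x i.succ) ^ (m i.succ : ℕ)) else 0 :=
      Finset.sum_nonneg fun m _ => hdiff0 m
    linarith [key]
  have hγ1 : γ ≤ 1 := hγr'.trans hr.2
  have hbM : p₁ + γ ≤ M := by rw [hMdef]; linarith
  -- each difference term is at most γ * c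
  have hdiffle : ∀ m : Fin (d + 2) → Fin (Δ + 1),
      (if (∑ i, (m i : ℕ)) ≤ Δ then
        A m * (((p₁ + γ) ^ (m 0 : ℕ) - p₁ ^ (m 0 : ℕ))
          * ∏ i : Fin (d + 1), (x i.succ) ^ (m i.succ : ℕ)) else 0) ≤ γ * c := by
    intro m
    split
    · have hk : (m 0 : ℕ) ≤ Δ := Fin.is_le _
      have h1 := pow_sub_pow_le' M p₁ (p₁ + γ) hM1 hp₁ (by linarith) hbM (m 0 : ℕ)
      rw [add_sub_cancel_left] at h1
      have hMk0 : (0:ℝ) ≤ M ^ (m 0 : ℕ) := by positivity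
      have h2 : γ * ((m 0 : ℕ) : ℝ) * M ^ (m 0 : ℕ) ≤ γ * (Δ:ℝ) * M ^ Δ :=
        mul_le_mul (mul_le_mul_of_nonneg_left (Nat.cast_le.2 hk) hγ)
          (pow_le_pow_right₀ hM1 hk) hMk0 (by positivity)
      have hD0 : (0:ℝ) ≤ (p₁ + γ) ^ (m 0 : ℕ) - p₁ ^ (m 0 : ℕ) := by
        have := pow_le_pow_left₀ hp₁ (le_add_of_nonneg_right hγ) (m 0 : ℕ)
        linarith
      have hDC : ((p₁ + γ) ^ (m 0 : ℕ) - p₁ ^ (m 0 : ℕ))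
            * (∏ i : Fin (d + 1), (x i.succ) ^ (m i.succ : ℕ))
          ≤ (γ * (Δ:ℝ) * M ^ Δ) * 2 ^ (Δ * (d + 1)) :=
        mul_le_mul (by linarith) (hCle m) (hC0 m) (by positivity)
      calc A m * (((p₁ + γ) ^ (m 0 : ℕ) - p₁ ^ (m 0 : ℕ))
            * ∏ i : Fin (d + 1), (x i.succ) ^ (m i.succ : ℕ))
          ≤ 1 * (((p₁ + γ) ^ (m 0 : ℕ) - p₁ ^ (m 0 : ℕ))
            * ∏ i : Fin (d + 1), (x i.succ) ^ (m i.succ : ℕ)) :=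
            mul_le_mul_of_nonneg_right (hA m).2 (mul_nonneg hD0 (hC0 m))
        _ = ((p₁ + γ) ^ (m 0 : ℕ) - p₁ ^ (m 0 : ℕ))
            * ∏ i : Fin (d + 1), (x i.succ) ^ (m i.succ : ℕ) := one_mul _
        _ ≤ (γ * (Δ:ℝ) * M ^ Δ) * 2 ^ (Δ * (d + 1)) := hDC
        _ = γ * c := by rw [hcdef]; ring
    · positivity
  have hsumle : (∑ m : Fin (d + 2) → Fin (Δ + 1),
      if (∑ i, (m i : ℕ)) ≤ Δ then
        A m * (((p₁ + γ) ^ (m 0 : ℕ) - p₁ ^ (m 0 : ℕ))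
          * ∏ i : Fin (d + 1), (x i.succ) ^ (m i.succ : ℕ)) else 0) ≤ N * (γ * c) := by
    calc _ ≤ ∑ _m : Fin (d + 2) → Fin (Δ + 1), γ * c :=
          Finset.sum_le_sum fun m _ => hdiffle m
      _ = N * (γ * c) := by
          rw [Finset.sum_const, Finset.card_univ, nsmul_eq_mul, hNdef]
  have hrK : r ≤ γ * (1 + N * c) := by nlinarith [key, hsumle]
  exact ⟨(div_le_iff₀ hK).2 hrK, hγr'⟩
end

section
/- Let Δ ≥ 2 be an integer, let 0 ≤ ε ≤ 1, and let P(x,y) = x − y^Δ + Σ_{i+j ≤ Δ} c_{ij} x^i y^j with 0 ≤ c_{ij} ≤ ε for all i, j ≥ 0 with i + j ≤ Δ. If y ∈ [1,2], x > 0 and P(x,y) = 0, then y^Δ − (Δ+1)²·2^{Δ²+Δ}·ε ≤ x ≤ y^Δ. -/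
open Finset

/-- For a packed bivariate polynomial
`P(x,y) = x − y^Δ + Σ_{i+j≤Δ} c_{ij} x^i y^j` with `0 ≤ c_{ij} ≤ ε`:
if `y ∈ [1,2]`, `x > 0` and `P(x,y) = 0`, then
`y^Δ − (Δ+1)²·2^(Δ²+Δ)·ε ≤ x ≤ y^Δ`. -/
theorem statement7 (Δ : ℕ) (hΔ : 2 ≤ Δ) (ε : ℝ) (hε0 : 0 ≤ ε) (hε1 : ε ≤ 1)
    (c : ℕ → ℕ → ℝ) (hc : ∀ i j, i + j ≤ Δ → 0 ≤ c i j ∧ c i j ≤ ε)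
    (x y : ℝ) (hy : y ∈ Set.Icc (1 : ℝ) 2) (hx : 0 < x)
    (hP : x - y ^ Δ +
        ∑ i ∈ Finset.range (Δ + 1), ∑ j ∈ Finset.range (Δ + 1 - i),
          c i j * x ^ i * y ^ j = 0) :
    y ^ Δ - ((Δ : ℝ) + 1) ^ 2 * 2 ^ (Δ ^ 2 + Δ) * ε ≤ x ∧ x ≤ y ^ Δ := by
  obtain ⟨hy1, hy2⟩ := hy
  have hy0 : (0:ℝ) ≤ y := by linarith
  set S := ∑ i ∈ Finset.range (Δ + 1), ∑ j ∈ Finset.range (Δ + 1 - i),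
      c i j * x ^ i * y ^ j with hSdef
  have hij : ∀ i j, i ∈ Finset.range (Δ+1) → j ∈ Finset.range (Δ+1-i) → i + j ≤ Δ := by
    intro i j hi hj
    simp only [Finset.mem_range] at hi hj
    omega
  have hS0 : 0 ≤ S := by
    apply Finset.sum_nonneg; intro i hi
    apply Finset.sum_nonneg; intro j hj
    have h1 := (hc i j (hij i j hi hj)).1
    positivity
  have hxeq : x = y ^ Δ - S := by linarith
  have hyΔ : y ^ Δ ≤ 2 ^ Δ := pow_le_pow_left₀ hy0 hy2 Δ
  have hx2 : x ≤ 2 ^ Δ := by linarith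
  have hterm : ∀ i j, i + j ≤ Δ → c i j * x ^ i * y ^ j ≤ ε * 2 ^ (Δ^2 + Δ) := by
    intro i j h
    have hxi : x ^ i ≤ 2 ^ (Δ^2) := by
      calc x ^ i ≤ ((2:ℝ)^Δ) ^ i := pow_le_pow_left₀ hx.le hx2 i
        _ = 2 ^ (Δ * i) := by rw [← pow_mul]
        _ ≤ 2 ^ (Δ^2) := by
            apply pow_le_pow_right₀ (by norm_num)
            have hi : i ≤ Δ := by omega
            nlinarith
    have hyj : y ^ j ≤ 2 ^ Δ := by
      calc y ^ j ≤ (2:ℝ) ^ j := pow_le_pow_left₀ hy0 hy2 j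
        _ ≤ 2 ^ Δ := pow_le_pow_right₀ (by norm_num) (by omega)
    obtain ⟨hc1, hc2⟩ := hc i j h
    have hxin : (0:ℝ) ≤ x ^ i := by positivity
    have hyjn : (0:ℝ) ≤ y ^ j := by positivity
    calc c i j * x ^ i * y ^ j ≤ ε * 2^(Δ^2) * 2^Δ := by
          gcongr
        _ = ε * 2 ^ (Δ^2 + Δ) := by rw [pow_add]; ring
  have hSbound : S ≤ ((Δ:ℝ)+1)^2 * 2^(Δ^2+Δ) * ε := by
    have h1 : S ≤ ∑ _i ∈ Finset.range (Δ+1), ((Δ:ℝ)+1) * (ε * 2^(Δ^2+Δ)) := by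
      apply Finset.sum_le_sum; intro i hi
      calc ∑ j ∈ Finset.range (Δ+1-i), c i j * x^i * y^j
          ≤ ∑ _j ∈ Finset.range (Δ+1-i), ε * 2^(Δ^2+Δ) :=
            Finset.sum_le_sum (fun j hj => hterm i j (hij i j hi hj))
        _ = ((Δ+1-i : ℕ):ℝ) * (ε*2^(Δ^2+Δ)) := by
            rw [Finset.sum_const, Finset.card_range, nsmul_eq_mul]
        _ ≤ ((Δ:ℝ)+1) * (ε*2^(Δ^2+Δ)) := by
            apply mul_le_mul_of_nonneg_right _ (by positivity)
            have : ((Δ+1-i : ℕ):ℝ) ≤ ((Δ+1 : ℕ):ℝ) := by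
              exact_mod_cast Nat.sub_le _ _
            push_cast at this ⊢
            linarith
    rw [Finset.sum_const, Finset.card_range, nsmul_eq_mul] at h1
    calc S ≤ ((Δ+1:ℕ):ℝ) * (((Δ:ℝ)+1) * (ε * 2^(Δ^2+Δ))) := h1
      _ = ((Δ:ℝ)+1)^2 * 2^(Δ^2+Δ) * ε := by push_cast; ring
  constructor
  · linarith
  · linarith
end

section
/- Let Δ ≥ 2 be an integer and set C = (Δ+1)²·2^{Δ²+Δ}. Let 0 < ε ≤ 1/(2C) and let P(x,y) = x − y^Δ + Σ_{i+j ≤ Δ} c_{ij} x^i y^j with 0 ≤ c_{ij} ≤ ε for all i, j. Then for every y in the interval I = [(1 + Cε)^{1/Δ}, 2^{1/Δ}] there exists a unique x > 0 with P(x,y) = 0, and this x lies in [1,2]; moreover the interval I has length at least 2^{1/Δ} − (3/2)^{1/Δ} > 0. -/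
open Finset

/-- Lemma `curvelen`: let `C = (Δ+1)²·2^(Δ²+Δ)` and `0 < ε ≤ 1/(2C)`. For a packed
bivariate polynomial `P(x,y) = x − y^Δ + Σ_{i+j≤Δ} c_{ij} x^i y^j` with
`0 ≤ c_{ij} ≤ ε`, for every `y` in `I = [(1+Cε)^(1/Δ), 2^(1/Δ)]` there is a unique
`x > 0` with `P(x,y) = 0`, and this `x` lies in `[1,2]`; moreover `I` has length at
least `2^(1/Δ) − (3/2)^(1/Δ) > 0`. -/
theorem statement8 (Δ : ℕ) (hΔ : 2 ≤ Δ) (ε : ℝ) (hε0 : 0 < ε)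
    (hε1 : ε ≤ 1 / (2 * (((Δ : ℝ) + 1) ^ 2 * 2 ^ (Δ ^ 2 + Δ))))
    (c : ℕ → ℕ → ℝ) (hc : ∀ i j, i + j ≤ Δ → 0 ≤ c i j ∧ c i j ≤ ε) :
    (∀ y ∈ Set.Icc
        ((1 + ((Δ : ℝ) + 1) ^ 2 * 2 ^ (Δ ^ 2 + Δ) * ε) ^ (1 / (Δ : ℝ)))
        ((2 : ℝ) ^ (1 / (Δ : ℝ))),
      (∃! x : ℝ, 0 < x ∧
          x - y ^ Δ +
            ∑ i ∈ Finset.range (Δ + 1), ∑ j ∈ Finset.range (Δ + 1 - i),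
              c i j * x ^ i * y ^ j = 0) ∧
        (∀ x : ℝ, 0 < x →
          x - y ^ Δ +
            ∑ i ∈ Finset.range (Δ + 1), ∑ j ∈ Finset.range (Δ + 1 - i),
              c i j * x ^ i * y ^ j = 0 →
          x ∈ Set.Icc (1 : ℝ) 2)) ∧
      ((2 : ℝ) ^ (1 / (Δ : ℝ)) - (3 / 2 : ℝ) ^ (1 / (Δ : ℝ)) ≤
        (2 : ℝ) ^ (1 / (Δ : ℝ)) -
          (1 + ((Δ : ℝ) + 1) ^ 2 * 2 ^ (Δ ^ 2 + Δ) * ε) ^ (1 / (Δ : ℝ))) ∧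
      (0 < (2 : ℝ) ^ (1 / (Δ : ℝ)) - (3 / 2 : ℝ) ^ (1 / (Δ : ℝ))) := by
  have hΔR : (2:ℝ) ≤ (Δ:ℝ) := by exact_mod_cast hΔ
  have hΔ0 : (Δ:ℝ) ≠ 0 := by linarith
  have hΔpos : (0:ℝ) < (Δ:ℝ) := by linarith
  set C : ℝ := ((Δ : ℝ) + 1) ^ 2 * 2 ^ (Δ ^ 2 + Δ) with hCdef
  have hCpos : 0 < C := by positivity
  have hCe : C * ε ≤ 1 / 2 := by
    have := mul_le_mul_of_nonneg_left hε1 hCpos.le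
    calc C * ε ≤ C * (1 / (2 * C)) := this
      _ = 1 / 2 := by field_simp
  have hCepos : 0 < C * ε := by positivity
  have hpow : ∀ a : ℝ, 0 ≤ a → (a ^ (1 / (Δ:ℝ))) ^ Δ = a := by
    intro a ha
    rw [← Real.rpow_natCast (a ^ (1 / (Δ:ℝ))) Δ, ← Real.rpow_mul ha, one_div,
      inv_mul_cancel₀ hΔ0, Real.rpow_one]
  have hbig : ((Δ:ℝ) + 1) ^ 2 * 2 ^ Δ ≤ C := by
    rw [hCdef]
    have h2 : (2:ℝ) ^ Δ ≤ 2 ^ (Δ ^ 2 + Δ) := by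
      apply pow_le_pow_right₀ (by norm_num)
      nlinarith [sq_nonneg Δ]
    nlinarith [sq_nonneg ((Δ:ℝ) + 1)]
  constructor
  · intro y hy
    have h1y : (1:ℝ) ≤ (1 + C * ε) ^ (1 / (Δ:ℝ)) := by
      calc (1:ℝ) = (1:ℝ) ^ (1 / (Δ:ℝ)) := (Real.one_rpow _).symm
        _ ≤ (1 + C * ε) ^ (1 / (Δ:ℝ)) :=
            Real.rpow_le_rpow zero_le_one (by linarith) (by positivity)
    have hy1 : (1:ℝ) ≤ y := le_trans h1y hy.1
    have hy0 : (0:ℝ) ≤ y := by linarith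
    have hy2 : y ≤ 2 := by
      refine le_trans hy.2 ?_
      calc (2:ℝ) ^ (1 / (Δ:ℝ)) ≤ 2 ^ (1:ℝ) :=
            Real.rpow_le_rpow_of_exponent_le (by norm_num)
              (by rw [div_le_one hΔpos]; linarith)
        _ = 2 := Real.rpow_one 2
    have hyΔlow : 1 + C * ε ≤ y ^ Δ := by
      have := pow_le_pow_left₀ (le_trans zero_le_one h1y) hy.1 Δ
      rwa [hpow _ (by linarith)] at this
    have hyΔhigh : y ^ Δ ≤ 2 := by
      have := pow_le_pow_left₀ hy0 hy.2 Δ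
      rwa [hpow 2 (by norm_num)] at this
    set f : ℝ → ℝ := fun x => x - y ^ Δ +
      ∑ i ∈ Finset.range (Δ + 1), ∑ j ∈ Finset.range (Δ + 1 - i),
        c i j * x ^ i * y ^ j with hfdef
    have hcmem : ∀ i ∈ Finset.range (Δ + 1), ∀ j ∈ Finset.range (Δ + 1 - i),
        0 ≤ c i j ∧ c i j ≤ ε := by
      intro i hi j hj
      refine hc i j ?_
      simp only [Finset.mem_range] at hi hj
      omega
    have hmono : ∀ a b : ℝ, 0 ≤ a → a < b → f a < f b := by
      intro a b ha hab
      simp only [hfdef]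
      have hsum : ∑ i ∈ Finset.range (Δ + 1), ∑ j ∈ Finset.range (Δ + 1 - i),
          c i j * a ^ i * y ^ j ≤ ∑ i ∈ Finset.range (Δ + 1),
          ∑ j ∈ Finset.range (Δ + 1 - i), c i j * b ^ i * y ^ j := by
        refine Finset.sum_le_sum fun i hi => Finset.sum_le_sum fun j hj => ?_
        have hcij := hcmem i hi j hj
        have : a ^ i ≤ b ^ i := pow_le_pow_left₀ ha hab.le i
        have : c i j * a ^ i ≤ c i j * b ^ i :=
          mul_le_mul_of_nonneg_left this hcij.1
        exact mul_le_mul_of_nonneg_right this (by positivity)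
      linarith
    have hcont : Continuous f := by
      apply Continuous.add
      · fun_prop
      · exact continuous_finset_sum _ fun i _ =>
          continuous_finset_sum _ fun j _ => by fun_prop
    have hSnonneg : ∀ x : ℝ, 0 ≤ x → 0 ≤ ∑ i ∈ Finset.range (Δ + 1),
        ∑ j ∈ Finset.range (Δ + 1 - i), c i j * x ^ i * y ^ j := by
      intro x hx
      refine Finset.sum_nonneg fun i hi => Finset.sum_nonneg fun j hj => ?_
      have hcij := hcmem i hi j hj
      exact mul_nonneg (mul_nonneg hcij.1 (pow_nonneg hx i)) (pow_nonneg hy0 j)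
    have hf2 : 0 ≤ f 2 := by
      have := hSnonneg 2 (by norm_num)
      simp only [hfdef]
      linarith
    have hf1 : f 1 ≤ 0 := by
      have hS1 : ∑ i ∈ Finset.range (Δ + 1), ∑ j ∈ Finset.range (Δ + 1 - i),
          c i j * (1:ℝ) ^ i * y ^ j ≤ ((Δ:ℝ) + 1) ^ 2 * 2 ^ Δ * ε := by
        calc ∑ i ∈ Finset.range (Δ + 1), ∑ j ∈ Finset.range (Δ + 1 - i),
            c i j * (1:ℝ) ^ i * y ^ j
            ≤ ∑ i ∈ Finset.range (Δ + 1), ∑ _j ∈ Finset.range (Δ + 1 - i),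
              ε * 2 ^ Δ := by
              refine Finset.sum_le_sum fun i hi => Finset.sum_le_sum fun j hj => ?_
              have hcij := hcmem i hi j hj
              have hyj : y ^ j ≤ 2 ^ Δ := by
                calc y ^ j ≤ 2 ^ j := pow_le_pow_left₀ hy0 hy2 j
                  _ ≤ 2 ^ Δ := by
                    apply pow_le_pow_right₀ (by norm_num)
                    simp only [Finset.mem_range] at hi hj; omega
              rw [one_pow, mul_one]
              exact mul_le_mul hcij.2 hyj (by positivity) hε0.le
          _ ≤ ∑ _i ∈ Finset.range (Δ + 1), ∑ _j ∈ Finset.range (Δ + 1),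
              ε * 2 ^ Δ := by
              refine Finset.sum_le_sum fun i _ => ?_
              refine Finset.sum_le_sum_of_subset_of_nonneg
                (Finset.range_subset_range.2 (by omega)) fun _ _ _ => by positivity
          _ = ((Δ:ℝ) + 1) ^ 2 * 2 ^ Δ * ε := by
              simp [Finset.sum_const, Finset.card_range, nsmul_eq_mul]
              push_cast; ring
      have hCε : ((Δ:ℝ) + 1) ^ 2 * 2 ^ Δ * ε ≤ C * ε :=
        mul_le_mul_of_nonneg_right hbig hε0.le
      simp only [hfdef]
      linarith
    obtain ⟨x, hx12, hfx⟩ : ∃ x ∈ Set.Icc (1:ℝ) 2, f x = 0 := by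
      have h0 : (0:ℝ) ∈ Set.Icc (f 1) (f 2) := ⟨hf1, hf2⟩
      obtain ⟨x, hx, hfx⟩ :=
        intermediate_value_Icc (by norm_num : (1:ℝ) ≤ 2) hcont.continuousOn h0
      exact ⟨x, hx, hfx⟩
    have hxpos : (0:ℝ) < x := lt_of_lt_of_le one_pos hx12.1
    have hroot_in : ∀ x' : ℝ, 0 < x' → f x' = 0 → x' ∈ Set.Icc (1:ℝ) 2 := by
      intro x' hx' hfx'
      constructor
      · by_contra h
        push_neg at h
        have := hmono x' 1 hx'.le h
        linarith
      · by_contra h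
        push_neg at h
        have := hmono 2 x' (by norm_num) h
        linarith
    refine ⟨⟨x, ⟨hxpos, hfx⟩, ?_⟩, hroot_in⟩
    rintro x' ⟨hx', hfx'⟩
    rcases lt_trichotomy x' x with h | h | h
    · have := hmono x' x hx'.le h
      rw [show f x' = 0 from hfx', show f x = 0 from hfx] at this
      linarith
    · exact h
    · have := hmono x x' hxpos.le h
      rw [show f x' = 0 from hfx', show f x = 0 from hfx] at this
      linarith
  · constructor
    · have : (1 + C * ε) ^ (1 / (Δ:ℝ)) ≤ ((3:ℝ)/2) ^ (1 / (Δ:ℝ)) :=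
        Real.rpow_le_rpow (by linarith) (by linarith) (by positivity)
      linarith
    · have : ((3:ℝ)/2) ^ (1 / (Δ:ℝ)) < (2:ℝ) ^ (1 / (Δ:ℝ)) :=
        Real.rpow_lt_rpow (by norm_num) (by norm_num) (by positivity)
      linarith
end

section
/- Let Δ, D ≥ 2 be integers. There exist constants ε₀ > 0 and c₀ > 0, depending only on Δ and D, such that the following holds for every 0 < ε ≤ ε₀. Let P(X₁, …, X_D) = X₁ − X₂^Δ + Σ_m A_m X₁^{m₁}···X_D^{m_D}, where the sum ranges over multi-indices m of total degree at most Δ and 0 ≤ A_m ≤ ε. Then the set { (x₂, …, x_D) ∈ [1,2]^{D−1} : there exists x₁ ∈ [1,2] with P(x₁, x₂, …, x_D) = 0 } has (D−1)-dimensional Lebesgue measure at least c₀. -/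
open Finset MeasureTheory

lemma packed_cont (Δ d : ℕ) (A : (Fin (d + 2) → Fin (Δ + 1)) → ℝ)
    (y : Fin (d + 1) → ℝ) :
    Continuous fun x₁ : ℝ => packedVal Δ d A (Fin.cons x₁ y) := by
  unfold packedVal
  simp only [Fin.prod_univ_succ, ← Fin.succ_zero_eq_one, Fin.cons_zero, Fin.cons_succ]
  apply Continuous.add
  · fun_prop
  · apply continuous_finset_sum
    intro m _
    split_ifs
    · fun_prop
    · exact continuous_const

lemma sum_bounds (Δ d : ℕ) (ε : ℝ) (A : (Fin (d + 2) → Fin (Δ + 1)) → ℝ)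
    (hA : ∀ m, 0 ≤ A m ∧ A m ≤ ε)
    (x : Fin (d + 2) → ℝ) (hx : ∀ i, 1 ≤ x i ∧ x i ≤ 2) :
    0 ≤ (∑ m : Fin (d + 2) → Fin (Δ + 1),
      if (∑ i, (m i : ℕ)) ≤ Δ then A m * ∏ i, (x i) ^ (m i : ℕ) else 0) ∧
    (∑ m : Fin (d + 2) → Fin (Δ + 1),
      if (∑ i, (m i : ℕ)) ≤ Δ then A m * ∏ i, (x i) ^ (m i : ℕ) else 0) ≤
      ((Δ + 1) ^ (d + 2) : ℝ) * (ε * 2 ^ Δ) := by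
  have hprodpos : ∀ m : Fin (d + 2) → Fin (Δ + 1),
      0 ≤ ∏ i, (x i) ^ (m i : ℕ) := by
    intro m
    apply Finset.prod_nonneg
    intro i _
    exact pow_nonneg (le_trans zero_le_one (hx i).1) _
  constructor
  · apply Finset.sum_nonneg
    intro m _
    split_ifs
    · exact mul_nonneg (hA m).1 (hprodpos m)
    · exact le_refl _
  · calc (∑ m : Fin (d + 2) → Fin (Δ + 1),
        if (∑ i, (m i : ℕ)) ≤ Δ then A m * ∏ i, (x i) ^ (m i : ℕ) else 0)
        ≤ ∑ _m : Fin (d + 2) → Fin (Δ + 1), ε * 2 ^ Δ := by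
          apply Finset.sum_le_sum
          intro m _
          have hε0 : 0 ≤ ε := le_trans (hA m).1 (hA m).2
          split_ifs with hm
          · have h1 : ∏ i, (x i) ^ (m i : ℕ) ≤ 2 ^ Δ := by
              calc ∏ i, (x i) ^ (m i : ℕ) ≤ ∏ i, (2 : ℝ) ^ (m i : ℕ) := by
                    apply Finset.prod_le_prod
                    · intro i _; exact pow_nonneg (le_trans zero_le_one (hx i).1) _
                    · intro i _; exact pow_le_pow_left₀ (le_trans zero_le_one (hx i).1) (hx i).2 _
                _ = (2 : ℝ) ^ (∑ i, (m i : ℕ)) := by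
                    rw [← Finset.prod_pow_eq_pow_sum]
                _ ≤ (2 : ℝ) ^ Δ := pow_le_pow_right₀ one_le_two hm
            exact mul_le_mul (hA m).2 h1 (hprodpos m) hε0
          · positivity
    _ = ((Δ + 1) ^ (d + 2) : ℝ) * (ε * 2 ^ Δ) := by
          have hcard : ((Finset.univ : Finset (Fin (d+2) → Fin (Δ+1))).card) = (Δ+1)^(d+2) := by
            simp
          rw [Finset.sum_const, nsmul_eq_mul, hcard]
          push_cast
          ring

/-- Lemma `base`: in dimension `D = d+2 ≥ 2` there are constants `ε₀ > 0` and
`c₀ > 0`, depending only on `Δ` and `D`, such that for every `0 < ε ≤ ε₀` and every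
packed polynomial `P` with coefficients in `[0,ε]`, the projection
`{(x₂,…,x_D) ∈ [1,2]^{D−1} : ∃ x₁ ∈ [1,2], P(x₁,x₂,…,x_D) = 0}` of the zero set of
`P` has `(D−1)`-dimensional Lebesgue measure at least `c₀`. -/
theorem statement9 (Δ d : ℕ) (hΔ : 2 ≤ Δ) :
    ∃ ε₀ : ℝ, 0 < ε₀ ∧ ∃ c₀ : ℝ, 0 < c₀ ∧
      ∀ ε : ℝ, 0 < ε → ε ≤ ε₀ →
        ∀ A : (Fin (d + 2) → Fin (Δ + 1)) → ℝ,
          (∀ m, 0 ≤ A m ∧ A m ≤ ε) →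
          ENNReal.ofReal c₀ ≤
            volume {y : Fin (d + 1) → ℝ |
              y ∈ Set.Icc (fun _ => (1 : ℝ)) (fun _ => (2 : ℝ)) ∧
              ∃ x₁ ∈ Set.Icc (1 : ℝ) 2, packedVal Δ d A (Fin.cons x₁ y) = 0} := by
  have hΔ0 : (Δ : ℝ) ≠ 0 := by positivity
  set N : ℝ := ((Δ + 1) ^ (d + 2) : ℝ) with hN
  have hNpos : 0 < N := by positivity
  refine ⟨1 / (2 * N * 2 ^ Δ), by positivity, ?_⟩
  set a : ℝ := (3 / 2 : ℝ) ^ ((Δ : ℝ)⁻¹) with ha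
  set b : ℝ := (2 : ℝ) ^ ((Δ : ℝ)⁻¹) with hb
  have haΔ : a ^ Δ = 3 / 2 := Real.rpow_inv_natCast_pow (by norm_num) (by omega)
  have hbΔ : b ^ Δ = 2 := Real.rpow_inv_natCast_pow (by norm_num) (by omega)
  have hab : a < b := Real.rpow_lt_rpow (by norm_num) (by norm_num) (by positivity)
  have ha1 : 1 ≤ a := by
    calc (1 : ℝ) = 1 ^ ((Δ : ℝ)⁻¹) := (Real.one_rpow _).symm
      _ ≤ a := Real.rpow_le_rpow zero_le_one (by norm_num) (by positivity)
  have hb2 : b ≤ 2 := by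
    calc b ≤ (2 : ℝ) ^ (1 : ℝ) := by
          apply Real.rpow_le_rpow_of_exponent_le one_le_two
          rw [inv_le_one_iff₀]; right; exact_mod_cast le_trans one_le_two hΔ
      _ = 2 := Real.rpow_one 2
  refine ⟨b - a, by linarith, ?_⟩
  intro ε hε hε₀ A hA
  -- the box T
  set l : Fin (d + 1) → ℝ := Function.update (fun _ => (1 : ℝ)) 0 a with hl
  set u : Fin (d + 1) → ℝ := Function.update (fun _ => (2 : ℝ)) 0 b with hu
  have hT : Set.Icc l u ⊆ {y : Fin (d + 1) → ℝ |
      y ∈ Set.Icc (fun _ => (1 : ℝ)) (fun _ => (2 : ℝ)) ∧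
      ∃ x₁ ∈ Set.Icc (1 : ℝ) 2, packedVal Δ d A (Fin.cons x₁ y) = 0} := by
    intro y hy
    have hyi : ∀ i, 1 ≤ y i ∧ y i ≤ 2 := by
      intro i
      have h1 := hy.1 i
      have h2 := hy.2 i
      rcases eq_or_ne i 0 with rfl | hi
      · simp only [hl, hu, Function.update_self] at h1 h2
        exact ⟨le_trans ha1 h1, le_trans h2 hb2⟩
      · simp only [hl, hu, Function.update_of_ne hi] at h1 h2
        exact ⟨h1, h2⟩
    have hy0a : a ≤ y 0 := by have := hy.1 0; simpa [hl] using this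
    have hy0b : y 0 ≤ b := by have := hy.2 0; simpa [hu] using this
    refine ⟨⟨fun i => (hyi i).1, fun i => (hyi i).2⟩, ?_⟩
    -- bounds on y 0 ^ Δ
    have hylo : (3 / 2 : ℝ) ≤ y 0 ^ Δ := by
      rw [← haΔ]
      exact pow_le_pow_left₀ (by linarith) hy0a Δ
    have hyhi : y 0 ^ Δ ≤ 2 := by
      rw [← hbΔ]
      exact pow_le_pow_left₀ (by linarith) hy0b Δ
    -- bound on error sum: for x in box
    set f : ℝ → ℝ := fun x₁ => packedVal Δ d A (Fin.cons x₁ y) with hf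
    have hbox : ∀ x₁ : ℝ, 1 ≤ x₁ → x₁ ≤ 2 → ∀ i, 1 ≤ (Fin.cons x₁ y : Fin (d+2) → ℝ) i ∧ (Fin.cons x₁ y : Fin (d+2) → ℝ) i ≤ 2 := by
      intro x₁ h1 h2 i
      induction i using Fin.cases with
      | zero => simpa using ⟨h1, h2⟩
      | succ j => simpa using hyi j
    have hval : ∀ x₁ : ℝ, 1 ≤ x₁ → x₁ ≤ 2 →
        x₁ - y 0 ^ Δ ≤ f x₁ ∧ f x₁ ≤ x₁ - y 0 ^ Δ + 1 / 2 := by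
      intro x₁ h1 h2
      have hsb := sum_bounds Δ d ε A hA (Fin.cons x₁ y) (hbox x₁ h1 h2)
      have hE : N * (ε * 2 ^ Δ) ≤ 1 / 2 := by
        rw [le_div_iff₀ (by positivity : (0:ℝ) < 2 * N * 2 ^ Δ)] at hε₀
        nlinarith [pow_pos (by norm_num : (0:ℝ) < 2) Δ]
      have hx0 : (Fin.cons x₁ y : Fin (d+2) → ℝ) 0 = x₁ := rfl
      have hx1 : (Fin.cons x₁ y : Fin (d+2) → ℝ) 1 = y 0 := by
        rw [← Fin.succ_zero_eq_one, Fin.cons_succ]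
      constructor
      · simp only [hf, packedVal, hx0, hx1]; linarith [hsb.1]
      · simp only [hf, packedVal, hx0, hx1]; linarith [hsb.2, hE]
    have hf1 : f 1 ≤ 0 := by
      have := (hval 1 le_rfl one_le_two).2; linarith
    have hf2 : 0 ≤ f 2 := by
      have := (hval 2 one_le_two le_rfl).1; linarith
    have hcont : ContinuousOn f (Set.Icc 1 2) := (packed_cont Δ d A y).continuousOn
    have := intermediate_value_Icc (by norm_num : (1:ℝ) ≤ 2) hcont
    have h0 : (0 : ℝ) ∈ Set.Icc (f 1) (f 2) := ⟨hf1, hf2⟩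
    obtain ⟨x₁, hx₁, hfx₁⟩ := this h0
    exact ⟨x₁, hx₁, hfx₁⟩
  calc ENNReal.ofReal (b - a) = volume (Set.Icc l u) := by
        rw [Real.volume_Icc_pi]
        rw [Finset.prod_eq_single 0]
        · norm_num [hl, hu]
        · intro i _ hi
          norm_num [hl, hu, Function.update_of_ne hi]
        · simp
    _ ≤ _ := measure_mono hT
end

section
/- Let a < b be reals, let k ≥ 1 be an integer, and let α : ℝ → ℝ be continuously differentiable on [a,b]. Suppose that for every v ∈ ℝ the set { s ∈ [a,b] : α(s) − v ∈ 2π·ℤ } has at most k elements. Then ∫_a^b |α'(s)| ds ≤ 2π·k². -/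
open Set Real

open MeasureTheory

lemma partition_sum_bound (a b m M : ℝ) (k : ℕ) (α : ℝ → ℝ) (n : ℕ) (t : ℕ → ℝ)
    (hαc : ContinuousOn α (Set.Icc a b))
    (hmM : m ≤ M)
    (hrange : ∀ s ∈ Set.Icc a b, α s ∈ Set.Icc m M)
    (hfin : ∀ v : ℝ, ({s ∈ Set.Icc a b | α s = v}).Finite)
    (hcount : ∀ v : ℝ, ({s ∈ Set.Icc a b | α s = v}).ncard ≤ k)
    (ht : ∀ i, i < n → t i < t (i + 1))
    (htmem : ∀ i, i ≤ n → t i ∈ Set.Icc a b) :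
    ∑ i ∈ Finset.range n, |α (t (i + 1)) - α (t i)| ≤ k * (M - m) := by
  classical
  set c : ℕ → ℝ := fun i => min (α (t i)) (α (t (i+1))) with hc
  set d : ℕ → ℝ := fun i => max (α (t i)) (α (t (i+1))) with hd
  have hcd : ∀ i, c i ≤ d i := fun i => min_le_max
  have habs : ∀ i, |α (t (i+1)) - α (t i)| = d i - c i := by
    intro i
    rw [hd, hc]
    dsimp only
    rw [max_sub_min_eq_abs, abs_sub_comm]
  -- monotonicity of t
  have hmono : ∀ j, j ≤ n → ∀ i, i ≤ j → t i ≤ t j := by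
    intro j
    induction j with
    | zero => intro _ i hi; simp [Nat.le_zero.mp hi]
    | succ j ih =>
      intro hj i hi
      rcases eq_or_lt_of_le hi with h | h
      · simp [h]
      · exact le_trans (ih (le_trans (Nat.le_succ j) hj) i (Nat.lt_succ_iff.mp h))
          (ht j (Nat.lt_of_succ_le hj)).le
  -- inclusion of value intervals in [m, M]
  have hIoo_sub : ∀ i, i < n → Set.Ioo (c i) (d i) ⊆ Set.Icc m M := by
    intro i hi y hy
    have h1 := hrange (t i) (htmem i hi.le)
    have h2 := hrange (t (i+1)) (htmem (i+1) hi)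
    constructor
    · exact le_trans (le_min h1.1 h2.1) hy.1.le
    · exact le_trans hy.2.le (max_le h1.2 h2.2)
  -- pointwise indicator bound off a finite exceptional set
  have hpt : ∀ y : ℝ, y ∉ (↑((Finset.range (n+1)).image fun i => α (t i)) : Set ℝ) →
      ∑ i ∈ Finset.range n, (Set.Ioo (c i) (d i)).indicator (1 : ℝ → ENNReal) y
        ≤ (k : ENNReal) * (Set.Icc m M).indicator 1 y := by
    intro y hy
    by_cases hyM : y ∈ Set.Icc m M
    · rw [Set.indicator_of_mem hyM, Pi.one_apply, mul_one]
      set T := (Finset.range n).filter (fun i => y ∈ Set.Ioo (c i) (d i)) with hT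
      have hsum : ∑ i ∈ Finset.range n, (Set.Ioo (c i) (d i)).indicator (1 : ℝ → ENNReal) y
          = (T.card : ENNReal) := by
        rw [Finset.card_eq_sum_ones, hT, Finset.sum_filter]
        push_cast
        refine Finset.sum_congr rfl fun i _ => ?_
        by_cases h : y ∈ Set.Ioo (c i) (d i) <;> simp [h]
      rw [hsum]
      have hex : ∀ i ∈ T, ∃ s, s ∈ Set.Ioo (t i) (t (i+1)) ∧ α s = y := by
        intro i hiT
        rw [hT, Finset.mem_filter] at hiT
        obtain ⟨hin, hyi⟩ := hiT
        have hin' : i < n := Finset.mem_range.mp hin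
        have hsub : Set.Icc (t i) (t (i+1)) ⊆ Set.Icc a b :=
          Set.Icc_subset_Icc (htmem i hin'.le).1 (htmem (i+1) hin').2
        have hcont' : ContinuousOn α (Set.Icc (t i) (t (i+1))) := hαc.mono hsub
        rcases le_total (α (t i)) (α (t (i+1))) with hle | hle
        · have him : Set.Ioo (α (t i)) (α (t (i+1))) ⊆ α '' Set.Ioo (t i) (t (i+1)) :=
            intermediate_value_Ioo (ht i hin').le hcont'
          have hy' : y ∈ Set.Ioo (α (t i)) (α (t (i+1))) := by
            have h1 : c i = α (t i) := min_eq_left hle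
            have h2 : d i = α (t (i+1)) := max_eq_right hle
            rwa [h1, h2] at hyi
          obtain ⟨s, hs, hαs⟩ := him hy'
          exact ⟨s, hs, hαs⟩
        · have him : Set.Ioo (α (t (i+1))) (α (t i)) ⊆ α '' Set.Ioo (t i) (t (i+1)) :=
            intermediate_value_Ioo' (ht i hin').le hcont'
          have hy' : y ∈ Set.Ioo (α (t (i+1))) (α (t i)) := by
            have h1 : c i = α (t (i+1)) := min_eq_right hle
            have h2 : d i = α (t i) := max_eq_left hle
            rwa [h1, h2] at hyi
          obtain ⟨s, hs, hαs⟩ := him hy'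
          exact ⟨s, hs, hαs⟩
      set σ : ℕ → ℝ := fun i =>
        if h : ∃ s, s ∈ Set.Ioo (t i) (t (i+1)) ∧ α s = y then h.choose else 0 with hσdef
      have hσ : ∀ i ∈ T, σ i ∈ Set.Ioo (t i) (t (i+1)) ∧ α (σ i) = y := by
        intro i hiT
        have h := hex i hiT
        simp only [hσdef, dif_pos h]
        exact h.choose_spec
      have hTn : ∀ i ∈ T, i < n := fun i hiT =>
        Finset.mem_range.mp (Finset.mem_filter.mp hiT).1
      have hcard : T.card ≤ ((hfin y).toFinset).card := by
        apply Finset.card_le_card_of_injOn σ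
        · intro i hiT
          rcases hσ i hiT with ⟨hs, hαs⟩
          rw [Finset.mem_coe, Set.Finite.mem_toFinset]
          have hin' : i < n := hTn i hiT
          exact ⟨⟨le_trans (htmem i hin'.le).1 hs.1.le,
            le_trans hs.2.le (htmem (i+1) hin').2⟩, hαs⟩
        · intro i hiT j hjT hij
          by_contra hne
          have key : ∀ p q : ℕ, p ∈ T → q ∈ T → p < q → σ p < σ q := by
            intro p q hpT hqT hpq
            have h1 : σ p < t (p+1) := (hσ p hpT).1.2
            have h2 : t q < σ q := (hσ q hqT).1.1
            have h3 : t (p+1) ≤ t q := hmono q (hTn q hqT).le (p+1) hpq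
            exact lt_of_lt_of_le h1 (le_trans h3 h2.le)
          rcases Nat.lt_or_ge i j with h | h
          · exact absurd hij (ne_of_lt (key i j hiT hjT h))
          · exact absurd hij.symm (ne_of_lt (key j i hjT hiT (lt_of_le_of_ne h (Ne.symm hne))))
      have hncard : ((hfin y).toFinset).card = ({s ∈ Set.Icc a b | α s = y}).ncard :=
        (Set.ncard_eq_toFinset_card _ (hfin y)).symm
      calc (T.card : ENNReal) ≤ (((hfin y).toFinset).card : ENNReal) := by
            exact_mod_cast hcard
        _ = (({s ∈ Set.Icc a b | α s = y}).ncard : ENNReal) := by rw [hncard]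
        _ ≤ (k : ENNReal) := by exact_mod_cast hcount y
    · have hzero : ∀ i ∈ Finset.range n,
          (Set.Ioo (c i) (d i)).indicator (1 : ℝ → ENNReal) y = 0 := by
        intro i hi
        exact Set.indicator_of_notMem
          (fun h => hyM (hIoo_sub i (Finset.mem_range.mp hi) h)) _
      rw [Finset.sum_congr rfl hzero]
      simp
  have hae : ∀ᵐ y : ℝ, ∑ i ∈ Finset.range n,
      (Set.Ioo (c i) (d i)).indicator (1 : ℝ → ENNReal) y
      ≤ (k : ENNReal) * (Set.Icc m M).indicator 1 y := by
    have hFz : volume (↑((Finset.range (n+1)).image fun i => α (t i)) : Set ℝ) = 0 :=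
      (Finset.finite_toSet _).measure_zero _
    filter_upwards [measure_eq_zero_iff_ae_notMem.mp hFz] with y hy using hpt y hy
  have key : ∑ i ∈ Finset.range n, ENNReal.ofReal (d i - c i)
      ≤ (k : ENNReal) * ENNReal.ofReal (M - m) := by
    calc ∑ i ∈ Finset.range n, ENNReal.ofReal (d i - c i)
        = ∑ i ∈ Finset.range n, ∫⁻ y, (Set.Ioo (c i) (d i)).indicator 1 y := by
          refine Finset.sum_congr rfl fun i _ => ?_
          rw [lintegral_indicator_one measurableSet_Ioo, Real.volume_Ioo]
      _ = ∫⁻ y, ∑ i ∈ Finset.range n, (Set.Ioo (c i) (d i)).indicator 1 y :=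
          (lintegral_finset_sum _ fun i _ => measurable_one.indicator measurableSet_Ioo).symm
      _ ≤ ∫⁻ y, (k : ENNReal) * (Set.Icc m M).indicator 1 y := lintegral_mono_ae hae
      _ = (k : ENNReal) * ENNReal.ofReal (M - m) := by
          rw [lintegral_const_mul _ (measurable_one.indicator measurableSet_Icc),
            lintegral_indicator_one measurableSet_Icc, Real.volume_Icc]
  have key2 : ENNReal.ofReal (∑ i ∈ Finset.range n, (d i - c i))
      ≤ ENNReal.ofReal ((k : ℝ) * (M - m)) := by
    rw [ENNReal.ofReal_sum_of_nonneg (fun i _ => sub_nonneg.mpr (hcd i)),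
      ENNReal.ofReal_mul (by positivity : (0:ℝ) ≤ (k:ℝ)), ENNReal.ofReal_natCast]
    exact key
  have key3 : ∑ i ∈ Finset.range n, (d i - c i) ≤ (k : ℝ) * (M - m) :=
    (ENNReal.ofReal_le_ofReal_iff
      (mul_nonneg (Nat.cast_nonneg k) (sub_nonneg.mpr hmM))).mp key2
  calc ∑ i ∈ Finset.range n, |α (t (i+1)) - α (t i)|
      = ∑ i ∈ Finset.range n, (d i - c i) := Finset.sum_congr rfl fun i _ => habs i
    _ ≤ _ := key3

/-- Lemma `anglebound`: if `α` is the (continuously differentiable) angle function of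
a curve parametrized by arc length on `[a,b]`, and every tangent direction (residue
class of the angle modulo `2π`) is attained at most `k` times, then the total
absolute curvature `∫_a^b |α'(s)| ds` is at most `2π·k²`. -/
theorem statement11 (a b : ℝ) (hab : a < b) (k : ℕ) (hk : 1 ≤ k)
    (α : ℝ → ℝ) (hα : ContDiffOn ℝ 1 α (Set.Icc a b))
    (hcount : ∀ v : ℝ,
      {s ∈ Set.Icc a b | ∃ m : ℤ, α s - v = 2 * Real.pi * (m : ℝ)}.Finite ∧
      {s ∈ Set.Icc a b | ∃ m : ℤ, α s - v = 2 * Real.pi * (m : ℝ)}.ncard ≤ k) :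
    ∫ s in a..b, |derivWithin α (Set.Icc a b) s| ≤ 2 * Real.pi * (k : ℝ) ^ 2 := by
  classical
  have hπ : (0:ℝ) < Real.pi := Real.pi_pos
  have hba : (0:ℝ) < b - a := sub_pos.mpr hab
  have hne : (Set.Icc a b).Nonempty := Set.nonempty_Icc.mpr hab.le
  have hαc : ContinuousOn α (Set.Icc a b) := hα.continuousOn
  set g : ℝ → ℝ := derivWithin α (Set.Icc a b) with hgdef
  have hgc : ContinuousOn g (Set.Icc a b) :=
    hα.continuousOn_derivWithin (uniqueDiffOn_Icc hab) le_rfl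
  -- level sets of α are small
  have hlev : ∀ v : ℝ, ({s ∈ Set.Icc a b | α s = v}).Finite ∧
      ({s ∈ Set.Icc a b | α s = v}).ncard ≤ k := by
    intro v
    have hsub : {s ∈ Set.Icc a b | α s = v}
        ⊆ {s ∈ Set.Icc a b | ∃ m : ℤ, α s - v = 2 * Real.pi * (m : ℝ)} := by
      rintro s ⟨hs, hv⟩
      exact ⟨hs, ⟨0, by simp [hv]⟩⟩
    exact ⟨(hcount v).1.subset hsub,
      le_trans (Set.ncard_le_ncard hsub (hcount v).1) (hcount v).2⟩
  -- extreme values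
  obtain ⟨sm, hsmmem, hsmmin⟩ := isCompact_Icc.exists_isMinOn hne hαc
  obtain ⟨sM, hsMmem, hsMmax⟩ := isCompact_Icc.exists_isMaxOn hne hαc
  set m := α sm with hm
  set M := α sM with hM
  have hrange : ∀ s ∈ Set.Icc a b, α s ∈ Set.Icc m M := fun s hs =>
    ⟨isMinOn_iff.mp hsmmin s hs, isMaxOn_iff.mp hsMmax s hs⟩
  have hmM : m ≤ M := isMinOn_iff.mp hsmmin sM hsMmem
  -- Step A : the range has length at most 2πk
  have hgap : M - m ≤ 2 * Real.pi * k := by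
    by_contra hlt
    push_neg at hlt
    have hIVT : ∀ j : ℕ, j ≤ k → ∃ s ∈ Set.Icc a b, α s = m + 2 * Real.pi * j := by
      intro j hj
      have hjk : (j:ℝ) ≤ (k:ℝ) := Nat.cast_le.mpr hj
      have hj0 : (0:ℝ) ≤ (j:ℝ) := Nat.cast_nonneg j
      have h1 : m + 2 * Real.pi * j ∈ Set.Icc m M := by
        constructor
        · nlinarith
        · nlinarith
      have h3 : Set.uIcc sm sM ⊆ Set.Icc a b := by
        rw [Set.uIcc_eq_union]
        exact Set.union_subset (Set.Icc_subset_Icc hsmmem.1 hsMmem.2)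
          (Set.Icc_subset_Icc hsMmem.1 hsmmem.2)
      have hsub : Set.Icc m M ⊆ α '' Set.Icc a b := by
        intro y hy
        have hy' : y ∈ Set.uIcc (α sm) (α sM) := by
          rw [Set.uIcc_of_le hmM]; exact hy
        obtain ⟨s, hs, hαs⟩ := intermediate_value_uIcc (hαc.mono h3) hy'
        exact ⟨s, h3 hs, hαs⟩
      obtain ⟨s, hsmem, hαs⟩ := hsub h1
      exact ⟨s, hsmem, hαs⟩
    choose sj hsjmem hsjval using fun j : Fin (k+1) => hIVT j (Nat.lt_succ_iff.mp j.2)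
    have hinj : Function.Injective sj := by
      intro i j hij
      have h1 : m + 2 * Real.pi * (i:ℕ) = m + 2 * Real.pi * (j:ℕ) := by
        rw [← hsjval i, ← hsjval j, hij]
      have h2 : ((i:ℕ):ℝ) = ((j:ℕ):ℝ) := by
        have h2π : (2:ℝ) * Real.pi ≠ 0 := by positivity
        have h3 : 2 * Real.pi * ((i:ℕ):ℝ) = 2 * Real.pi * ((j:ℕ):ℝ) := by linarith
        exact mul_left_cancel₀ h2π h3
      have : (i:ℕ) = (j:ℕ) := Nat.cast_injective h2
      exact Fin.ext this
    have himg : ↑(Finset.univ.image sj)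
        ⊆ {s ∈ Set.Icc a b | ∃ mi : ℤ, α s - m = 2 * Real.pi * (mi:ℝ)} := by
      intro x hx
      simp only [Finset.coe_image, Finset.coe_univ, Set.image_univ, Set.mem_range] at hx
      obtain ⟨j, rfl⟩ := hx
      refine ⟨hsjmem j, ⟨(j:ℤ), ?_⟩⟩
      rw [hsjval j]
      push_cast
      ring
    have hcard : (Finset.univ.image sj).card = k + 1 := by
      rw [Finset.card_image_of_injective _ hinj, Finset.card_univ, Fintype.card_fin]
    have h4 := Set.ncard_le_ncard himg (hcount m).1
    rw [Set.ncard_coe_finset, hcard] at h4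
    have h5 := le_trans h4 (hcount m).2
    omega
  -- Step C : Riemann-type approximation
  refine le_of_forall_pos_le_add ?_
  intro ε hε
  set ε' := ε / (2 * (b - a)) with hε'def
  have hε' : 0 < ε' := by positivity
  have hUC : UniformContinuousOn g (Set.Icc a b) :=
    isCompact_Icc.uniformContinuousOn_of_continuous hgc
  rw [Metric.uniformContinuousOn_iff] at hUC
  obtain ⟨δ, hδ, hδ'⟩ := hUC ε' hε'
  obtain ⟨n, hn⟩ := exists_nat_gt (max 1 ((b - a) / δ))
  have hn1 : (1:ℝ) < n := lt_of_le_of_lt (le_max_left _ _) hn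
  have hnpos : (0:ℝ) < n := lt_trans one_pos hn1
  have hnne : (n:ℝ) ≠ 0 := ne_of_gt hnpos
  set Δ := (b - a) / n with hΔdef
  have hΔpos : 0 < Δ := by positivity
  have hΔδ : Δ < δ := by
    have h2 : (b - a) / δ < n := lt_of_le_of_lt (le_max_right _ _) hn
    rw [div_lt_iff₀ hδ] at h2
    rw [hΔdef, div_lt_iff₀ hnpos]
    nlinarith
  set t : ℕ → ℝ := fun i => a + i * Δ with htdef
  have ht0 : t 0 = a := by simp [htdef]
  have htn : t n = b := by
    rw [htdef, hΔdef]
    field_simp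
    ring
  have htstep : ∀ i : ℕ, t (i+1) - t i = Δ := by
    intro i
    simp only [htdef]
    push_cast
    ring
  have htlt : ∀ i, i < n → t i < t (i+1) := by
    intro i _
    have := htstep i
    linarith
  have htmono : ∀ i j : ℕ, i ≤ j → t i ≤ t j := by
    intro i j hij
    simp only [htdef]
    have h1 : (i:ℝ) ≤ (j:ℝ) := Nat.cast_le.mpr hij
    nlinarith
  have htmem : ∀ i, i ≤ n → t i ∈ Set.Icc a b := by
    intro i hi
    constructor
    · rw [← ht0]; exact htmono 0 i (Nat.zero_le i)
    · rw [← htn]; exact htmono i n hi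
  have hsubi : ∀ i, i < n → Set.Icc (t i) (t (i+1)) ⊆ Set.Icc a b := fun i hi =>
    Set.Icc_subset_Icc (htmem i hi.le).1 (htmem (i+1) hi).2
  have hpieceint : ∀ i, i < n →
      IntervalIntegrable (fun s => |g s|) volume (t i) (t (i+1)) := by
    intro i hi
    apply ContinuousOn.intervalIntegrable
    rw [Set.uIcc_of_le (htlt i hi).le]
    exact (hgc.mono (hsubi i hi)).abs
  have hgint2 : ∀ i, i < n → IntervalIntegrable g volume (t i) (t (i+1)) := by
    intro i hi
    apply ContinuousOn.intervalIntegrable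
    rw [Set.uIcc_of_le (htlt i hi).le]
    exact hgc.mono (hsubi i hi)
  have hFTC : ∀ i, i < n → (∫ s in t i..t (i+1), g s) = α (t (i+1)) - α (t i) := by
    intro i hi
    apply intervalIntegral.integral_eq_sub_of_hasDeriv_right_of_le (htlt i hi).le
      (hαc.mono (hsubi i hi)) ?_ (hgint2 i hi)
    intro x hx
    have hxab : x ∈ Set.Ioo a b :=
      ⟨lt_of_le_of_lt (htmem i hi.le).1 hx.1, lt_of_lt_of_le hx.2 (htmem (i+1) hi).2⟩
    have hxmem : x ∈ Set.Icc a b := Set.Ioo_subset_Icc_self hxab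
    have hdw : HasDerivWithinAt α (g x) (Set.Icc a b) x :=
      ((hα.differentiableOn one_ne_zero) x hxmem).hasDerivWithinAt
    have hda : HasDerivAt α (g x) x := hdw.hasDerivAt (Icc_mem_nhds hxab.1 hxab.2)
    exact hda.hasDerivWithinAt
  have hclose : ∀ i, i < n → ∀ s ∈ Set.Icc (t i) (t (i+1)), |g s - g (t i)| ≤ ε' := by
    intro i hi s hs
    have h1 : dist s (t i) < δ := by
      rw [Real.dist_eq, abs_of_nonneg (sub_nonneg.mpr hs.1)]
      calc s - t i ≤ t (i+1) - t i := by linarith [hs.2]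
        _ = Δ := htstep i
        _ < δ := hΔδ
    have h2 := hδ' s (hsubi i hi hs) (t i)
      (hsubi i hi ⟨le_refl _, (htlt i hi).le⟩) h1
    rw [Real.dist_eq] at h2
    exact h2.le
  have hpiece : ∀ i, i < n →
      (∫ s in t i..t (i+1), |g s|) ≤ |α (t (i+1)) - α (t i)| + 2 * ε' * Δ := by
    intro i hi
    have h1 : (∫ s in t i..t (i+1), |g s|) ≤ (|g (t i)| + ε') * Δ := by
      have hmono' := intervalIntegral.integral_mono_on (htlt i hi).le (hpieceint i hi)
        (intervalIntegrable_const (c := |g (t i)| + ε')) (fun s hs => by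
          calc |g s| = |g (t i) + (g s - g (t i))| := by ring_nf
            _ ≤ |g (t i)| + |g s - g (t i)| := abs_add_le _ _
            _ ≤ |g (t i)| + ε' := by linarith [hclose i hi s hs])
      rw [intervalIntegral.integral_const, htstep i, smul_eq_mul, mul_comm] at hmono'
      exact hmono'
    have hdiff : |(∫ s in t i..t (i+1), g s) - g (t i) * Δ| ≤ ε' * Δ := by
      have heq : (∫ s in t i..t (i+1), (g s - g (t i)))
          = (∫ s in t i..t (i+1), g s) - g (t i) * Δ := by
        rw [intervalIntegral.integral_sub (hgint2 i hi) intervalIntegrable_const,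
          intervalIntegral.integral_const, htstep i, smul_eq_mul, mul_comm]
      rw [← heq]
      have hbound := intervalIntegral.norm_integral_le_of_norm_le_const
        (f := fun s => g s - g (t i)) (a := t i) (b := t (i+1)) (C := ε') (fun x hx => by
          rw [Set.uIoc_of_le (htlt i hi).le] at hx
          exact hclose i hi x (Set.Ioc_subset_Icc_self hx))
      rw [Real.norm_eq_abs] at hbound
      calc |∫ s in t i..t (i+1), (g s - g (t i))| ≤ ε' * |t (i+1) - t i| := hbound
        _ = ε' * Δ := by rw [htstep i, abs_of_nonneg hΔpos.le]
    have h2 : |g (t i)| * Δ ≤ |α (t (i+1)) - α (t i)| + ε' * Δ := by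
      rw [hFTC i hi] at hdiff
      have h3 : |g (t i) * Δ| ≤ |α (t (i+1)) - α (t i)|
          + |(α (t (i+1)) - α (t i)) - g (t i) * Δ| := by
        calc |g (t i) * Δ|
            = |(α (t (i+1)) - α (t i)) - ((α (t (i+1)) - α (t i)) - g (t i) * Δ)| := by
              ring_nf
          _ ≤ _ := abs_sub _ _
      rw [abs_mul, abs_of_nonneg hΔpos.le] at h3
      linarith
    calc (∫ s in t i..t (i+1), |g s|) ≤ (|g (t i)| + ε') * Δ := h1
      _ = |g (t i)| * Δ + ε' * Δ := by ring
      _ ≤ |α (t (i+1)) - α (t i)| + ε' * Δ + ε' * Δ := by linarith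
      _ = |α (t (i+1)) - α (t i)| + 2 * ε' * Δ := by ring
  -- sum over the pieces
  have hsplit : (∫ s in a..b, |g s|)
      = ∑ i ∈ Finset.range n, ∫ s in t i..t (i+1), |g s| := by
    rw [intervalIntegral.sum_integral_adjacent_intervals (fun i hi => hpieceint i hi),
      ht0, htn]
  have hpart := partition_sum_bound a b m M k α n t hαc hmM hrange
    (fun v => (hlev v).1) (fun v => (hlev v).2) htlt htmem
  have hsum2 : ∑ i ∈ Finset.range n, (2 * ε' * Δ) = ε := by
    rw [Finset.sum_const, Finset.card_range, nsmul_eq_mul, hΔdef, hε'def]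
    field_simp
  calc (∫ s in a..b, |g s|)
      = ∑ i ∈ Finset.range n, ∫ s in t i..t (i+1), |g s| := hsplit
    _ ≤ ∑ i ∈ Finset.range n, (|α (t (i+1)) - α (t i)| + 2 * ε' * Δ) :=
        Finset.sum_le_sum (fun i hi => hpiece i (Finset.mem_range.mp hi))
    _ = (∑ i ∈ Finset.range n, |α (t (i+1)) - α (t i)|)
        + ∑ i ∈ Finset.range n, (2 * ε' * Δ) := Finset.sum_add_distrib
    _ ≤ k * (M - m) + ε := by rw [hsum2]; linarith [hpart]
    _ ≤ 2 * Real.pi * (k:ℝ) ^ 2 + ε := by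
        have hk0 : (0:ℝ) ≤ (k:ℝ) := Nat.cast_nonneg k
        nlinarith [mul_nonneg hk0 (sub_nonneg.mpr hgap)]
end
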